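/- arXiv:2303.04286 — 3 statements merged into one kernel-verified Lean document; each statement's English description precedes it below -/
import Mathlib

section
/- Let (Ω, F, P) be a probability space, X : Ω → Matrix (Fin d₁) (Fin d₂) ℝ a random matrix with square-integrable entries and E[X] = 0, Y : Ω → ℝ a random variable, A₁ and A₂ disjoint measurable subsets of ℝ, and Ỹ := 1{Y ∈ A₁} − 1{Y ∈ A₂}. For λ ≥ 0 define L(u, v, t) := Var(uᵀXv) + λ·E[(1 − Ỹ·(uᵀXv − t))₊]. Let U ∈ Matrix (Fin d₁) (Fin r₁) ℝ, V ∈ Matrix (Fin d₂) (Fin r₂) ℝ, and let m := σ(ω ↦ Uᵀ X(ω) V). Fix (u, v, t) ∈ ℝ^{d₁} × ℝ^{d₂} × ℝ, assume Y and X are conditionally independent given m, and assume there exist η_r ∈ ℝ^{r₁} and η_c ∈ ℝ^{r₂} such that E[uᵀXv | m] = (Uη_r)ᵀX(Vη_c) almost surely. Then L(u, v, t) ≥ L(Uη_r, Vη_c, t). -/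
open MeasureTheory ProbabilityTheory Matrix

noncomputable section

instance {m n : Type*} : MeasurableSpace (Matrix m n ℝ) :=
  inferInstanceAs (MeasurableSpace (m → n → ℝ))

/-- The bilinear form `uᵀ M v = Σ_{i,j} uᵢ M_{ij} vⱼ`. -/
def bilin {d₁ d₂ : ℕ} (u : Fin d₁ → ℝ) (M : Matrix (Fin d₁) (Fin d₂) ℝ) (v : Fin d₂ → ℝ) : ℝ :=
  ∑ i, ∑ j, u i * M i j * v j

/-- The sliced response `Ỹ = 1{Y ∈ A₁} − 1{Y ∈ A₂}`. -/
def sliceLabel {Ω : Type*} (A₁ A₂ : Set ℝ) (Y : Ω → ℝ) (ω : Ω) : ℝ :=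
  A₁.indicator 1 (Y ω) - A₂.indicator 1 (Y ω)

/-- The population PSMM objective
`L(u, v, t) = Var(uᵀXv) + λ·E[(1 − Ỹ(uᵀXv − t))₊]`. -/
def PSMMobj {Ω : Type*} [MeasurableSpace Ω] {d₁ d₂ : ℕ} (μ : Measure Ω)
    (X : Ω → Matrix (Fin d₁) (Fin d₂) ℝ) (Ytil : Ω → ℝ) (lam : ℝ)
    (u : Fin d₁ → ℝ) (v : Fin d₂ → ℝ) (t : ℝ) : ℝ :=
  variance (fun ω => bilin u (X ω) v) μ
    + lam * ∫ ω, max (1 - Ytil ω * (bilin u (X ω) v - t)) 0 ∂μ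

/-- Conditional independence of `Y` and `X` given a sub-σ-algebra `m`:
for all bounded measurable `g, h`, `E[g(Y)h(X) | m] = E[g(Y)|m] ⬝ E[h(X)|m]` a.s. -/
def CondIndepBdd {Ω α : Type*} [MeasurableSpace Ω] [MeasurableSpace α]
    (μ : Measure Ω) (m : MeasurableSpace Ω) (Y : Ω → ℝ) (X : Ω → α) : Prop :=
  ∀ (g : ℝ → ℝ) (h : α → ℝ), Measurable g → Measurable h →
    (∃ C, ∀ x, |g x| ≤ C) → (∃ C, ∀ x, |h x| ≤ C) →
    μ[fun ω => g (Y ω) * h (X ω) | m]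
      =ᵐ[μ] fun ω => (μ[fun ω' => g (Y ω') | m]) ω * (μ[fun ω' => h (X ω') | m]) ω

theorem measurable_bilin {a b : ℕ} (p : Fin a → ℝ) (q : Fin b → ℝ) :
    Measurable fun M : Matrix (Fin a) (Fin b) ℝ => bilin p M q := by
  unfold bilin
  refine Finset.measurable_sum _ fun i _ => Finset.measurable_sum _ fun j _ => ?_
  have h1 : Measurable fun M : Matrix (Fin a) (Fin b) ℝ => M i j := by
    have : Measurable fun M : Matrix (Fin a) (Fin b) ℝ => M i := measurable_pi_apply i
    exact (measurable_pi_apply j).comp this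
  exact (measurable_const.mul h1).mul measurable_const

theorem memLp_bilin {Ω : Type*} [MeasurableSpace Ω] {μ : Measure Ω} {a b : ℕ}
    {X : Ω → Matrix (Fin a) (Fin b) ℝ} (hXL2 : ∀ i j, MemLp (fun ω => X ω i j) 2 μ)
    (p : Fin a → ℝ) (q : Fin b → ℝ) :
    MemLp (fun ω => bilin p (X ω) q) 2 μ := by
  unfold bilin
  refine memLp_finset_sum (f := fun i ω => ∑ j, p i * X ω i j * q j) _ fun i _ => ?_
  refine memLp_finset_sum (f := fun j ω => p i * X ω i j * q j) _ fun j _ => ?_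
  exact MemLp.ae_eq (Filter.Eventually.of_forall fun ω => by ring)
    ((hXL2 i j).const_mul (p i * q j))

theorem bilin_transform {d₁ d₂ r₁ r₂ : ℕ} (U : Matrix (Fin d₁) (Fin r₁) ℝ)
    (V : Matrix (Fin d₂) (Fin r₂) ℝ) (ηr : Fin r₁ → ℝ) (ηc : Fin r₂ → ℝ)
    (M : Matrix (Fin d₁) (Fin d₂) ℝ) :
    bilin (U.mulVec ηr) M (V.mulVec ηc) = bilin ηr (Uᵀ * M * V) ηc := by
  have h : ∀ {a b : ℕ} (p : Fin a → ℝ) (N : Matrix (Fin a) (Fin b) ℝ) (q : Fin b → ℝ),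
      bilin p N q = p ⬝ᵥ N.mulVec q := by
    intro a b p N q
    simp [bilin, dotProduct, Matrix.mulVec, Finset.mul_sum, mul_assoc]
  rw [h, h]
  rw [Matrix.mulVec_mulVec, Matrix.dotProduct_mulVec, Matrix.dotProduct_mulVec,
    Matrix.mul_assoc, ← Matrix.transpose_transpose U, Matrix.mulVec_transpose,
    Matrix.vecMul_vecMul]
  simp

theorem integrable_L2_mul {Ω : Type*} [MeasurableSpace Ω] {μ : Measure Ω} {f g : Ω → ℝ}
    (hf : MemLp f 2 μ) (hg : MemLp g 2 μ) : Integrable (fun ω => f ω * g ω) μ := by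
  have h := (((hf.add hg).integrable_sq.sub hf.integrable_sq).sub hg.integrable_sq).div_const 2
  refine h.congr (Filter.Eventually.of_forall fun ω => ?_)
  simp only [Pi.sub_apply, Pi.add_apply]
  ring

theorem integrable_hinge {Ω : Type*} [MeasurableSpace Ω] {μ : Measure Ω} [IsFiniteMeasure μ]
    {f : Ω → ℝ} (hf : Integrable f μ) (c t : ℝ) :
    Integrable (fun ω => max (1 - c * (f ω - t)) 0) μ := by
  refine Integrable.mono' ((integrable_const (1 + |c| * |t|)).add ((hf.abs).const_mul |c|))
    ?_ (Filter.Eventually.of_forall fun ω => ?_)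
  · exact ((aestronglyMeasurable_const.sub
      ((hf.1.sub aestronglyMeasurable_const).const_mul c)).sup aestronglyMeasurable_const)
  · simp only [Real.norm_eq_abs, Pi.add_apply]
    rw [abs_of_nonneg (le_max_right _ _)]
    refine max_le ?_ ?_
    · have h1 : |c * (f ω - t)| ≤ |c| * (|f ω| + |t|) := by
        rw [abs_mul]
        exact mul_le_mul_of_nonneg_left (abs_sub _ _) (abs_nonneg c)
      nlinarith [neg_abs_le (c * (f ω - t)), abs_nonneg (f ω), abs_nonneg c, abs_nonneg t]
    · positivity
theorem condexp_indicator_mul_condindep {Ω α : Type*} {m m0 : MeasurableSpace Ω}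
    {μ : Measure Ω} [IsProbabilityMeasure μ] [MeasurableSpace α]
    (hm : m ≤ m0) {Y : Ω → ℝ} (hY : Measurable Y)
    {X : Ω → α} (hX : Measurable X)
    (hCI : CondIndepBdd μ m Y X) {A : Set ℝ} (hA : MeasurableSet A)
    {H : α → ℝ} (hH : Measurable H) (hH0 : ∀ x, 0 ≤ H x)
    (hHint : Integrable (fun ω => H (X ω)) μ) :
    μ[fun ω => A.indicator 1 (Y ω) * H (X ω)|m]
      =ᵐ[μ] fun ω => (μ[fun ω' => A.indicator 1 (Y ω')|m]) ω
        * (μ[fun ω' => H (X ω')|m]) ω := by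
  haveI : SigmaFinite (μ.trim hm) := by infer_instance
  set G : Ω → ℝ := fun ω => A.indicator 1 (Y ω) with hGdef
  set K : Ω → ℝ := fun ω => H (X ω) with hKdef
  have hGb : ∀ ω, |G ω| ≤ 1 ∧ 0 ≤ G ω ∧ G ω ≤ 1 := by
    intro ω
    simp only [hGdef, Set.indicator_apply]
    by_cases h : Y ω ∈ A <;> simp [h]
  have hGmeas : Measurable G := (measurable_const.indicator hA).comp hY
  have hGint : Integrable G μ := by
    refine Integrable.mono' (integrable_const 1) hGmeas.aestronglyMeasurable
      (Filter.Eventually.of_forall fun ω => ?_)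
    rw [Real.norm_eq_abs]; exact (hGb ω).1
  have hKmeas : Measurable K := hH.comp hX
  have hGK_int : Integrable (fun ω => G ω * K ω) μ :=
    hHint.bdd_mul hGmeas.aestronglyMeasurable (c := 1) (Filter.Eventually.of_forall fun ω => by
      rw [Real.norm_eq_abs]; exact (hGb ω).1)
  set p : Ω → ℝ := μ[G|m] with hpdef
  -- a.e. bounds on p
  have hp0 : 0 ≤ᵐ[μ] p := condExp_nonneg (Filter.Eventually.of_forall fun ω => (hGb ω).2.1)
  have hp1 : p ≤ᵐ[μ] 1 := by
    have h1 : p ≤ᵐ[μ] μ[(fun _ => (1:ℝ))|m] :=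
      condExp_mono hGint (integrable_const 1)
        (Filter.Eventually.of_forall fun ω => (hGb ω).2.2)
    have h2 : μ[(fun _ => (1:ℝ))|m] = fun _ => (1:ℝ) := condExp_const hm (1:ℝ)
    filter_upwards [h1] with ω hω1
    rw [h2] at hω1
    exact hω1
  set D : Ω → ℝ := fun ω => (μ[fun ω' => G ω' * K ω'|m]) ω - p ω * (μ[K|m]) ω with hDdef
  have hpabs : ∀ᵐ ω ∂μ, ‖p ω‖ ≤ 1 := by
    filter_upwards [hp0, hp1] with ω h0 h1
    rw [Real.norm_eq_abs, abs_of_nonneg h0]; exact h1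
  have hDint : Integrable D μ :=
    integrable_condExp.sub (integrable_condExp.bdd_mul integrable_condExp.1 hpabs)
  -- bound for each n
  have hKn_int : ∀ n : ℕ, Integrable (fun ω => min (K ω) n) μ := by
    intro n
    refine Integrable.mono hHint ((hKmeas.min measurable_const).aestronglyMeasurable)
      (Filter.Eventually.of_forall fun ω => ?_)
    rw [Real.norm_eq_abs, Real.norm_eq_abs, abs_of_nonneg (le_min (hH0 _) (Nat.cast_nonneg n)),
      abs_of_nonneg (hH0 _)]
    exact min_le_left _ _
  have hGKn_int : ∀ n : ℕ, Integrable (fun ω => G ω * min (K ω) n) μ := fun n =>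
    (hKn_int n).bdd_mul hGmeas.aestronglyMeasurable (c := 1) (Filter.Eventually.of_forall fun ω => by
      rw [Real.norm_eq_abs]; exact (hGb ω).1)
  have hKKn_int : ∀ n : ℕ, Integrable (fun ω => K ω - min (K ω) n) μ := fun n =>
    hHint.sub (hKn_int n)
  have hGKKn_int : ∀ n : ℕ, Integrable (fun ω => G ω * (K ω - min (K ω) n)) μ := fun n =>
    (hKKn_int n).bdd_mul hGmeas.aestronglyMeasurable (c := 1) (Filter.Eventually.of_forall fun ω => by
      rw [Real.norm_eq_abs]; exact (hGb ω).1)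
  have hbound : ∀ n : ℕ, ∫ ω, |D ω| ∂μ ≤ 2 * ∫ ω, (K ω - min (K ω) n) ∂μ := by
    intro n
    have hEn := hCI (A.indicator 1) (fun x => min (H x) n)
      (measurable_const.indicator hA) (hH.min measurable_const)
      ⟨1, fun x => by
        by_cases h : x ∈ A <;> simp [Set.indicator_apply, h]⟩
      ⟨n, fun x => by
        rw [abs_of_nonneg (le_min (hH0 _) (Nat.cast_nonneg n))]
        exact min_le_right _ _⟩
    have h1 : μ[fun ω => G ω * (K ω - min (K ω) n)|m]
        =ᵐ[μ] μ[fun ω => G ω * K ω|m] - μ[fun ω => G ω * min (K ω) n|m] := by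
      have heq : (fun ω => G ω * (K ω - min (K ω) n))
          = (fun ω => G ω * K ω) - fun ω => G ω * min (K ω) n := by
        funext ω; simp [mul_sub]
      rw [heq]
      exact condExp_sub hGK_int (hGKn_int n) m
    have h2 : μ[fun ω => K ω - min (K ω) n|m]
        =ᵐ[μ] μ[K|m] - μ[fun ω => min (K ω) n|m] := by
      have heq : (fun ω => K ω - min (K ω) n) = K - fun ω => min (K ω) n := rfl
      rw [heq]
      exact condExp_sub hHint (hKn_int n) m
    have hae : ∀ᵐ ω ∂μ, |D ω| ≤ |(μ[fun ω' => G ω' * (K ω' - min (K ω') n)|m]) ω|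
        + |(μ[fun ω' => K ω' - min (K ω') n|m]) ω| := by
      filter_upwards [h1, h2, hEn, hpabs] with ω e1 e2 e3 hpω
      have hD : D ω = (μ[fun ω' => G ω' * (K ω' - min (K ω') n)|m]) ω
          - p ω * (μ[fun ω' => K ω' - min (K ω') n|m]) ω := by
        simp only [hDdef]
        simp only [Pi.sub_apply] at e1 e2
        rw [e1, e2]
        have e3' : (μ[fun ω' => G ω' * min (K ω') n|m]) ω
            = p ω * (μ[fun ω' => min (K ω') n|m]) ω := e3
        rw [e3']
        ring
      rw [hD]
      refine (abs_sub _ _).trans ?_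
      have hb : |p ω * (μ[fun ω' => K ω' - min (K ω') n|m]) ω|
          ≤ |(μ[fun ω' => K ω' - min (K ω') n|m]) ω| := by
        rw [abs_mul]
        calc |p ω| * |(μ[fun ω' => K ω' - min (K ω') n|m]) ω|
            ≤ 1 * |(μ[fun ω' => K ω' - min (K ω') n|m]) ω| :=
              mul_le_mul_of_nonneg_right ((Real.norm_eq_abs (p ω)) ▸ hpω) (abs_nonneg _)
          _ = _ := one_mul _
      linarith
    calc ∫ ω, |D ω| ∂μ
        ≤ ∫ ω, (|(μ[fun ω' => G ω' * (K ω' - min (K ω') n)|m]) ω|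
            + |(μ[fun ω' => K ω' - min (K ω') n|m]) ω|) ∂μ := by
          refine integral_mono_ae hDint.abs (integrable_condExp.abs.add integrable_condExp.abs) hae
      _ = (∫ ω, |(μ[fun ω' => G ω' * (K ω' - min (K ω') n)|m]) ω| ∂μ)
            + ∫ ω, |(μ[fun ω' => K ω' - min (K ω') n|m]) ω| ∂μ :=
          integral_add integrable_condExp.abs integrable_condExp.abs
      _ ≤ (∫ ω, |G ω * (K ω - min (K ω) n)| ∂μ) + ∫ ω, |K ω - min (K ω) n| ∂μ := by
          gcongr ?_ + ?_
          · exact integral_abs_condExp_le _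
          · exact integral_abs_condExp_le _
      _ ≤ (∫ ω, (K ω - min (K ω) n) ∂μ) + ∫ ω, (K ω - min (K ω) n) ∂μ := by
          gcongr ?_ + ?_
          · refine integral_mono (hGKKn_int n).abs (hKKn_int n) fun ω => ?_
            rw [abs_mul]
            have h0 : 0 ≤ K ω - min (K ω) n := sub_nonneg.2 (min_le_left _ _)
            calc |G ω| * |K ω - min (K ω) n| ≤ 1 * |K ω - min (K ω) n| := by
                  gcongr; exact (hGb ω).1
              _ = K ω - min (K ω) n := by rw [one_mul, abs_of_nonneg h0]
          · refine integral_mono (hKKn_int n).abs (hKKn_int n) fun ω => ?_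
            rw [abs_of_nonneg (sub_nonneg.2 (min_le_left _ _))]
      _ = 2 * ∫ ω, (K ω - min (K ω) n) ∂μ := by ring
  -- the bound tends to 0
  have htend : Filter.Tendsto (fun n : ℕ => 2 * ∫ ω, (K ω - min (K ω) n) ∂μ)
      Filter.atTop (nhds 0) := by
    have hconv : Filter.Tendsto (fun n : ℕ => ∫ ω, min (K ω) n ∂μ)
        Filter.atTop (nhds (∫ ω, K ω ∂μ)) := by
      refine MeasureTheory.tendsto_integral_of_dominated_convergence K
        (fun n => (hKmeas.min measurable_const).aestronglyMeasurable) hHint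
        (fun n => Filter.Eventually.of_forall fun ω => ?_)
        (Filter.Eventually.of_forall fun ω => ?_)
      · rw [Real.norm_eq_abs, abs_of_nonneg (le_min (hH0 _) (Nat.cast_nonneg n))]
        exact min_le_left _ _
      · have hev : ∀ᶠ n : ℕ in Filter.atTop, min (K ω) n = K ω :=
          Filter.eventually_atTop.2 ⟨⌈K ω⌉₊, fun n hn =>
            min_eq_left ((Nat.le_ceil _).trans (Nat.cast_le.2 hn))⟩
        exact Filter.Tendsto.congr' (hev.mono fun n h => h.symm) tendsto_const_nhds
    have : Filter.Tendsto (fun n : ℕ => ∫ ω, (K ω - min (K ω) n) ∂μ)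
        Filter.atTop (nhds 0) := by
      have heq : ∀ n : ℕ, ∫ ω, (K ω - min (K ω) n) ∂μ
          = (∫ ω, K ω ∂μ) - ∫ ω, min (K ω) n ∂μ := fun n =>
        integral_sub hHint (hKn_int n)
      simp_rw [heq]
      have := Filter.Tendsto.sub (tendsto_const_nhds
        (x := ∫ ω, K ω ∂μ) (f := Filter.atTop (α := ℕ))) hconv
      simpa using this
    simpa using this.const_mul 2
  have hD0 : ∫ ω, |D ω| ∂μ = 0 := by
    refine le_antisymm (ge_of_tendsto' htend hbound) ?_
    exact integral_nonneg fun ω => abs_nonneg _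
  have hDae : D =ᵐ[μ] 0 := by
    have := (integral_eq_zero_iff_of_nonneg (fun ω => abs_nonneg (D ω)) hDint.abs).mp hD0
    filter_upwards [this] with ω hω
    simpa [abs_eq_zero] using hω
  filter_upwards [hDae] with ω hω
  have : D ω = 0 := hω
  rw [hDdef] at this
  simp only [] at this
  linarith [this]
theorem stmt6_aux {Ω : Type*} {m m0 : MeasurableSpace Ω} {μ : Measure Ω}
    [IsProbabilityMeasure μ] {d₁ d₂ r₁ r₂ : ℕ} (hm : m ≤ m0)
    (X : Ω → Matrix (Fin d₁) (Fin d₂) ℝ) (hX : Measurable X)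
    (hXL2 : ∀ i j, MemLp (fun ω => X ω i j) 2 μ)
    (Y : Ω → ℝ) (hY : Measurable Y)
    (A₁ A₂ : Set ℝ) (hA₁ : MeasurableSet A₁) (hA₂ : MeasurableSet A₂)
    (hdisj : Disjoint A₁ A₂)
    (lam : ℝ) (hlam : 0 ≤ lam)
    (U : Matrix (Fin d₁) (Fin r₁) ℝ) (V : Matrix (Fin d₂) (Fin r₂) ℝ)
    (u : Fin d₁ → ℝ) (v : Fin d₂ → ℝ) (t : ℝ)
    (ηr : Fin r₁ → ℝ) (ηc : Fin r₂ → ℝ)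
    (hgmm : Measurable[m] (fun ω => bilin (U.mulVec ηr) (X ω) (V.mulVec ηc)))
    (hCI : CondIndepBdd μ m Y X)
    (hbilin : μ[fun ω => bilin u (X ω) v | m]
      =ᵐ[μ] fun ω => bilin (U.mulVec ηr) (X ω) (V.mulVec ηc)) :
    PSMMobj μ X (sliceLabel A₁ A₂ Y) lam (U.mulVec ηr) (V.mulVec ηc) t
      ≤ PSMMobj μ X (sliceLabel A₁ A₂ Y) lam u v t := by
  classical
  haveI hSF : SigmaFinite (μ.trim hm) := by infer_instance
  unfold PSMMobj
  set f : Ω → ℝ := fun ω => bilin u (X ω) v with hfdef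
  set g : Ω → ℝ := fun ω => bilin (U.mulVec ηr) (X ω) (V.mulVec ηc) with hgdef
  have hfmeas : Measurable f := (measurable_bilin u v).comp hX
  have hgmeas : Measurable g := (measurable_bilin _ _).comp hX
  have hfL2 : MemLp f 2 μ := memLp_bilin hXL2 u v
  have hgL2 : MemLp g 2 μ := memLp_bilin hXL2 _ _
  have hfInt : Integrable f μ := hfL2.integrable one_le_two
  have hgInt : Integrable g μ := hgL2.integrable one_le_two
  have hcond : μ[f|m] =ᵐ[μ] g := hbilin
  have hgm : Measurable[m] g := hgmm
  -- variance part
  have hvar : variance g μ ≤ variance f μ := by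
    have hEg : ∫ ω, g ω ∂μ = ∫ ω, f ω ∂μ := by
      rw [integral_congr_ae hcond.symm]
      exact integral_condExp hm
    have hgfInt : Integrable (fun ω => g ω * f ω) μ := integrable_L2_mul hgL2 hfL2
    have hggInt : Integrable (fun ω => g ω * g ω) μ := integrable_L2_mul hgL2 hgL2
    have hfg : ∫ ω, g ω * f ω ∂μ = ∫ ω, g ω * g ω ∂μ := by
      have h1 : μ[g * f|m] =ᵐ[μ] g * μ[f|m] :=
        condExp_mul_of_stronglyMeasurable_left hgm.stronglyMeasurable hgfInt hfInt
      have h2 : (fun ω => g ω * f ω) = g * f := rfl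
      calc ∫ ω, g ω * f ω ∂μ = ∫ ω, (μ[g * f|m]) ω ∂μ := by
            rw [integral_condExp hm]; rfl
        _ = ∫ ω, (g * μ[f|m]) ω ∂μ := integral_congr_ae h1
        _ = ∫ ω, g ω * g ω ∂μ := by
            refine integral_congr_ae ?_
            filter_upwards [hcond] with ω hω
            simp only [Pi.mul_apply]
            rw [hω]
    have hsq : 0 ≤ ∫ ω, (f ω - g ω)^2 ∂μ := integral_nonneg fun ω => sq_nonneg _
    have hexp : ∫ ω, (f ω - g ω)^2 ∂μ
        = (∫ ω, f ω^2 ∂μ) - (2:ℝ) * (∫ ω, g ω * f ω ∂μ) + ∫ ω, g ω^2 ∂μ := by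
      have heq : (fun ω => (f ω - g ω)^2)
          = fun ω => (f ω^2 - 2*(g ω * f ω)) + g ω^2 := funext fun ω => by ring
      have ia : Integrable (fun ω => f ω^2 - 2*(g ω * f ω)) μ :=
        hfL2.integrable_sq.sub (hgfInt.const_mul 2)
      have ib : Integrable (fun ω => g ω^2) μ := hgL2.integrable_sq
      have ic : Integrable (fun ω => f ω^2) μ := hfL2.integrable_sq
      have id' : Integrable (fun ω => 2*(g ω * f ω)) μ := hgfInt.const_mul 2
      rw [heq, integral_add ia ib, integral_sub ic id', integral_const_mul]
    have hgg : ∫ ω, g ω * g ω ∂μ = ∫ ω, g ω^2 ∂μ := by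
      refine integral_congr_ae (Filter.Eventually.of_forall fun ω => ?_)
      ring
    have hle : ∫ ω, g ω^2 ∂μ ≤ ∫ ω, f ω^2 ∂μ := by
      rw [hfg, hgg] at hexp
      linarith
    rw [variance_eq_sub hgL2, variance_eq_sub hfL2]
    have e1 : μ[g ^ 2] = ∫ ω, g ω^2 ∂μ := rfl
    have e2 : μ[f ^ 2] = ∫ ω, f ω^2 ∂μ := rfl
    have e3 : μ[g] = ∫ ω, g ω ∂μ := rfl
    have e4 : μ[f] = ∫ ω, f ω ∂μ := rfl
    rw [e1, e2, e3, e4, hEg]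
    linarith
  -- hinge part
  have key : ∀ (A : Set ℝ), MeasurableSet A → ∀ (c : ℝ),
      ∫ ω, A.indicator 1 (Y ω) * max (1 - c * (g ω - t)) 0 ∂μ
        ≤ ∫ ω, A.indicator 1 (Y ω) * max (1 - c * (f ω - t)) 0 ∂μ := by
    intro A hA c
    set H : Matrix (Fin d₁) (Fin d₂) ℝ → ℝ :=
      fun M => max (1 - c * (bilin u M v - t)) 0 with hHdef
    have hHmeas : Measurable H :=
      (measurable_const.sub (((measurable_bilin u v).sub measurable_const).const_mul c)).max
        measurable_const
    have hH0 : ∀ x, 0 ≤ H x := fun x => le_max_right _ _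
    have hKfInt : Integrable (fun ω => H (X ω)) μ := integrable_hinge hfInt c t
    have hKgInt : Integrable (fun ω => max (1 - c * (g ω - t)) 0) μ :=
      integrable_hinge hgInt c t
    set G : Ω → ℝ := fun ω => A.indicator 1 (Y ω) with hGdef
    have hGb : ∀ ω, |G ω| ≤ 1 ∧ 0 ≤ G ω ∧ G ω ≤ 1 := by
      intro ω
      by_cases h : Y ω ∈ A <;> simp [hGdef, Set.indicator_apply, h]
    have hGmeas : Measurable G := (measurable_const.indicator hA).comp hY
    have hGint : Integrable G μ := by
      refine Integrable.mono' (integrable_const 1) hGmeas.aestronglyMeasurable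
        (Filter.Eventually.of_forall fun ω => ?_)
      rw [Real.norm_eq_abs]; exact (hGb ω).1
    have hmain := condexp_indicator_mul_condindep hm hY hX hCI hA hHmeas hH0 hKfInt
    set p : Ω → ℝ := μ[G|m] with hpdef
    have hp0 : 0 ≤ᵐ[μ] p := condExp_nonneg (Filter.Eventually.of_forall fun ω => (hGb ω).2.1)
    have hp1 : p ≤ᵐ[μ] 1 := by
      have h1 : p ≤ᵐ[μ] μ[(fun _ => (1:ℝ))|m] :=
        condExp_mono hGint (integrable_const 1)
          (Filter.Eventually.of_forall fun ω => (hGb ω).2.2)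
      have h2 : μ[(fun _ => (1:ℝ))|m] = fun _ => (1:ℝ) := condExp_const hm (1:ℝ)
      filter_upwards [h1] with ω hω1
      rw [h2] at hω1
      exact hω1
    have hpabs : ∀ᵐ ω ∂μ, ‖p ω‖ ≤ 1 := by
      filter_upwards [hp0, hp1] with ω h0 h1
      rw [Real.norm_eq_abs, abs_of_nonneg h0]; exact h1
    -- Jensen step
    set Kg : Ω → ℝ := fun ω => max (1 - c * (g ω - t)) 0 with hKgdef
    have hJ : Kg ≤ᵐ[μ] μ[fun ω => H (X ω)|m] := by
      have haff_int : Integrable (fun ω => 1 - c * (f ω - t)) μ := by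
        refine (integrable_const (1:ℝ)).sub ?_
        exact ((hfInt.sub (integrable_const t)).const_mul c)
      have hge1 : μ[fun ω => 1 - c * (f ω - t)|m] ≤ᵐ[μ] μ[fun ω => H (X ω)|m] :=
        condExp_mono haff_int hKfInt
          (Filter.Eventually.of_forall fun ω => le_max_left _ _)
      have hge0 : (0 : Ω → ℝ) ≤ᵐ[μ] μ[fun ω => H (X ω)|m] :=
        condExp_nonneg (Filter.Eventually.of_forall fun ω => le_max_right _ _)
      have haff : μ[fun ω => 1 - c * (f ω - t)|m] =ᵐ[μ] fun ω => 1 - c * (g ω - t) := by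
        have heq : (fun ω => 1 - c * (f ω - t)) = (fun _ => (1:ℝ)) - c • (f - fun _ => t) := by
          funext ω
          simp only [Pi.sub_apply, Pi.smul_apply, smul_eq_mul]
        rw [heq]
        have hs1 := condExp_sub (f := fun _ => (1:ℝ)) (g := c • (f - fun _ => t)) (m := m)
          (μ := μ) (integrable_const 1) (((hfInt.sub (integrable_const t))).smul c)
        have hs2 := condExp_smul (μ := μ) (m := m) c (f - fun _ => t)
        have hs3 := condExp_sub (f := f) (g := fun _ => t) (m := m) (μ := μ)
          hfInt (integrable_const t)
        filter_upwards [hs1, hs2, hs3, hcond] with ω e1 e2 e3 e4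
        simp only [Pi.sub_apply, Pi.smul_apply, smul_eq_mul] at e1 e2 e3
        rw [e1, e2, e3, e4, condExp_const hm (1:ℝ), condExp_const hm (t:ℝ)]
      filter_upwards [hge1, hge0, haff] with ω e1 e0 ea
      have : 1 - c * (g ω - t) ≤ (μ[fun ω => H (X ω)|m]) ω := by rw [← ea]; exact e1
      exact max_le this (by simpa using e0)
    -- chain of (in)equalities
    have hGKf_int : Integrable (fun ω => G ω * H (X ω)) μ :=
      hKfInt.bdd_mul hGmeas.aestronglyMeasurable (c := 1) (Filter.Eventually.of_forall fun ω => by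
        rw [Real.norm_eq_abs]; exact (hGb ω).1)
    have hGKg_int : Integrable (fun ω => G ω * Kg ω) μ :=
      hKgInt.bdd_mul hGmeas.aestronglyMeasurable (c := 1) (Filter.Eventually.of_forall fun ω => by
        rw [Real.norm_eq_abs]; exact (hGb ω).1)
    have hKgm : Measurable[m] Kg := by
      refine Measurable.max ?_ measurable_const
      exact Measurable.sub measurable_const ((hgm.sub measurable_const).const_mul c)
    have step1 : ∫ ω, G ω * H (X ω) ∂μ = ∫ ω, p ω * (μ[fun ω' => H (X ω')|m]) ω ∂μ := by
      rw [← integral_condExp hm (f := fun ω => G ω * H (X ω))]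
      exact integral_congr_ae hmain
    have step2 : ∫ ω, p ω * Kg ω ∂μ ≤ ∫ ω, p ω * (μ[fun ω' => H (X ω')|m]) ω ∂μ := by
      refine integral_mono_ae ?_ ?_ ?_
      · exact hKgInt.bdd_mul integrable_condExp.1 hpabs
      · exact integrable_condExp.bdd_mul integrable_condExp.1 hpabs
      · filter_upwards [hp0, hJ] with ω h0 hj
        exact mul_le_mul_of_nonneg_left hj h0
    have step3 : ∫ ω, p ω * Kg ω ∂μ = ∫ ω, G ω * Kg ω ∂μ := by
      have h1 : μ[Kg * G|m] =ᵐ[μ] Kg * μ[G|m] :=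
        condExp_mul_of_stronglyMeasurable_left hKgm.stronglyMeasurable
          (hGKg_int.congr (Filter.Eventually.of_forall fun ω => by
            simp [mul_comm])) hGint
      calc ∫ ω, p ω * Kg ω ∂μ = ∫ ω, (Kg * μ[G|m]) ω ∂μ := by
            refine integral_congr_ae (Filter.Eventually.of_forall fun ω => ?_)
            simp [hpdef, mul_comm]
        _ = ∫ ω, (μ[Kg * G|m]) ω ∂μ := (integral_congr_ae h1).symm
        _ = ∫ ω, (Kg * G) ω ∂μ := integral_condExp hm
        _ = ∫ ω, G ω * Kg ω ∂μ := by
            refine integral_congr_ae (Filter.Eventually.of_forall fun ω => ?_)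
            simp [mul_comm]
    calc ∫ ω, G ω * Kg ω ∂μ = ∫ ω, p ω * Kg ω ∂μ := step3.symm
      _ ≤ ∫ ω, p ω * (μ[fun ω' => H (X ω')|m]) ω ∂μ := step2
      _ = ∫ ω, G ω * H (X ω) ∂μ := step1.symm
  -- decomposition of the hinge loss
  have hdec : ∀ (z : Ω → ℝ) (ω : Ω), max (1 - sliceLabel A₁ A₂ Y ω * (z ω - t)) 0
      = A₁.indicator 1 (Y ω) * max (1 - 1 * (z ω - t)) 0
        + A₂.indicator 1 (Y ω) * max (1 - (-1) * (z ω - t)) 0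
        + (1 - A₁.indicator 1 (Y ω) - A₂.indicator 1 (Y ω)) := by
    intro z ω
    by_cases h1 : Y ω ∈ A₁
    · have h2 : Y ω ∉ A₂ := fun h2 => Set.disjoint_left.mp hdisj h1 h2
      simp [sliceLabel, Set.indicator_apply, h1, h2]
    · by_cases h2 : Y ω ∈ A₂
      · simp [sliceLabel, Set.indicator_apply, h1, h2]
      · simp [sliceLabel, Set.indicator_apply, h1, h2]
  have hIint : Integrable (fun ω => 1 - A₁.indicator (1:ℝ→ℝ) (Y ω)
      - A₂.indicator (1:ℝ→ℝ) (Y ω)) μ := by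
    have i1 : Integrable (fun ω => A₁.indicator (1:ℝ→ℝ) (Y ω)) μ := by
      refine Integrable.mono' (integrable_const 1)
        ((measurable_const.indicator hA₁).comp hY).aestronglyMeasurable
        (Filter.Eventually.of_forall fun ω => ?_)
      rw [Real.norm_eq_abs]
      by_cases h : Y ω ∈ A₁ <;> simp [Set.indicator_apply, h]
    have i2 : Integrable (fun ω => A₂.indicator (1:ℝ→ℝ) (Y ω)) μ := by
      refine Integrable.mono' (integrable_const 1)
        ((measurable_const.indicator hA₂).comp hY).aestronglyMeasurable
        (Filter.Eventually.of_forall fun ω => ?_)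
      rw [Real.norm_eq_abs]
      by_cases h : Y ω ∈ A₂ <;> simp [Set.indicator_apply, h]
    exact ((integrable_const 1).sub i1).sub i2
  have hsplit : ∀ (z : Ω → ℝ), Integrable z μ →
      ∫ ω, max (1 - sliceLabel A₁ A₂ Y ω * (z ω - t)) 0 ∂μ
      = (∫ ω, A₁.indicator 1 (Y ω) * max (1 - 1 * (z ω - t)) 0 ∂μ)
        + (∫ ω, A₂.indicator 1 (Y ω) * max (1 - (-1) * (z ω - t)) 0 ∂μ)
        + ∫ ω, (1 - A₁.indicator 1 (Y ω) - A₂.indicator 1 (Y ω)) ∂μ := by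
    intro z hz
    have j1 : Integrable (fun ω => A₁.indicator 1 (Y ω) * max (1 - 1 * (z ω - t)) 0) μ := by
      refine (integrable_hinge hz 1 t).bdd_mul
        ((measurable_const.indicator hA₁).comp hY).aestronglyMeasurable (c := 1) (Filter.Eventually.of_forall fun ω => ?_)
      rw [Real.norm_eq_abs]
      by_cases h : Y ω ∈ A₁ <;> simp [Set.indicator_apply, h]
    have j2 : Integrable (fun ω => A₂.indicator 1 (Y ω) * max (1 - (-1) * (z ω - t)) 0) μ := by
      refine (integrable_hinge hz (-1) t).bdd_mul
        ((measurable_const.indicator hA₂).comp hY).aestronglyMeasurable (c := 1) (Filter.Eventually.of_forall fun ω => ?_)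
      rw [Real.norm_eq_abs]
      by_cases h : Y ω ∈ A₂ <;> simp [Set.indicator_apply, h]
    have j12 : Integrable (fun ω => A₁.indicator 1 (Y ω) * max (1 - 1 * (z ω - t)) 0
        + A₂.indicator 1 (Y ω) * max (1 - (-1) * (z ω - t)) 0) μ := j1.add j2
    rw [integral_congr_ae (Filter.Eventually.of_forall (hdec z)),
      integral_add j12 hIint, integral_add j1 j2]
  have hhinge : ∫ ω, max (1 - sliceLabel A₁ A₂ Y ω * (g ω - t)) 0 ∂μ
      ≤ ∫ ω, max (1 - sliceLabel A₁ A₂ Y ω * (f ω - t)) 0 ∂μ := by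
    rw [hsplit g hgInt, hsplit f hfInt]
    have k1 := key A₁ hA₁ 1
    have k2 := key A₂ hA₂ (-1)
    exact add_le_add (add_le_add k1 k2) le_rfl
  exact add_le_add hvar (mul_le_mul_of_nonneg_left hhinge hlam)


/-- **Key inequality in Theorem 1.** If `Y ⫫ X | σ(UᵀXV)` and
`E[uᵀXv | σ(UᵀXV)] = (Uη_r)ᵀX(Vη_c)` a.s., then `L(u,v,t) ≥ L(Uη_r, Vη_c, t)`. -/
theorem stmt_6 {Ω : Type*} [MeasurableSpace Ω] {μ : Measure Ω} [IsProbabilityMeasure μ]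
    {d₁ d₂ r₁ r₂ : ℕ}
    (X : Ω → Matrix (Fin d₁) (Fin d₂) ℝ) (hX : Measurable X)
    (hXL2 : ∀ i j, MemLp (fun ω => X ω i j) 2 μ)
    (hXmean : ∀ i j, ∫ ω, X ω i j ∂μ = 0)
    (Y : Ω → ℝ) (hY : Measurable Y)
    (A₁ A₂ : Set ℝ) (hA₁ : MeasurableSet A₁) (hA₂ : MeasurableSet A₂)
    (hdisj : Disjoint A₁ A₂)
    (lam : ℝ) (hlam : 0 ≤ lam)
    (U : Matrix (Fin d₁) (Fin r₁) ℝ) (V : Matrix (Fin d₂) (Fin r₂) ℝ)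
    (u : Fin d₁ → ℝ) (v : Fin d₂ → ℝ) (t : ℝ)
    (ηr : Fin r₁ → ℝ) (ηc : Fin r₂ → ℝ)
    (hCI : CondIndepBdd μ
      (MeasurableSpace.comap (fun ω => Uᵀ * X ω * V) inferInstance) Y X)
    (hbilin : μ[fun ω => bilin u (X ω) v |
        MeasurableSpace.comap (fun ω => Uᵀ * X ω * V) inferInstance]
      =ᵐ[μ] fun ω => bilin (U.mulVec ηr) (X ω) (V.mulVec ηc)) :
    PSMMobj μ X (sliceLabel A₁ A₂ Y) lam (U.mulVec ηr) (V.mulVec ηc) t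
      ≤ PSMMobj μ X (sliceLabel A₁ A₂ Y) lam u v t := by
  have hφ : Measurable (fun ω => Uᵀ * X ω * V) := by
    apply measurable_pi_iff.mpr
    intro a
    rw [measurable_pi_iff]
    intro b
    have : (fun ω => (Uᵀ * X ω * V) a b)
        = fun ω => ∑ j, (∑ i, Uᵀ a i * X ω i j) * V j b := by
      funext ω
      simp [Matrix.mul_apply]
    rw [this]
    refine Finset.measurable_sum _ fun j _ => Measurable.mul_const ?_ _
    refine Finset.measurable_sum _ fun i _ => Measurable.const_mul ?_ _
    have h1 : Measurable fun ω => X ω i := (measurable_pi_apply i).comp hX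
    exact (measurable_pi_apply j).comp h1
  refine stmt6_aux hφ.comap_le X hX hXL2 Y hY A₁ A₂ hA₁ hA₂ hdisj lam hlam U V u v t ηr ηc
    ?_ hCI hbilin
  have heq : (fun ω => bilin (U.mulVec ηr) (X ω) (V.mulVec ηc))
      = fun ω => bilin ηr ((fun ω => Uᵀ * X ω * V) ω) ηc :=
    funext fun ω => bilin_transform U V ηr ηc (X ω)
  rw [heq]
  exact (measurable_bilin ηr ηc).comp (Measurable.of_comap_le le_rfl)
end
end

section
/- Let (Ω, F, P) be a probability space, X : Ω → Matrix (Fin d₁) (Fin d₂) ℝ square-integrable with E[X] = 0, Y : Ω → ℝ, Ỹ := 1{Y ∈ A₁} − 1{Y ∈ A₂} for disjoint measurable A₁, A₂, λ ≥ 0, and L(u, v, t) := Var(uᵀXv) + λ·E[(1 − Ỹ(uᵀXv − t))₊]. Let U, V be matrices with m := σ(ω ↦ UᵀX(ω)V), suppose Y and X are conditionally independent given m, and suppose that for every (u, v) ∈ ℝ^{d₁} × ℝ^{d₂} there exist η_r ∈ ℝ^{r₁}, η_c ∈ ℝ^{r₂} with E[uᵀXv | m] = (Uη_r)ᵀX(Vη_c)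 a.s. If (u*, v*, t*) minimizes L over ℝ^{d₁} × ℝ^{d₂} × ℝ, then u*ᵀXv* = E[u*ᵀXv* | m] almost surely; equivalently, there exist η_r, η_c such that u*ᵀXv* = (Uη_r)ᵀX(Vη_c) almost surely. -/
open MeasureTheory ProbabilityTheory Matrix

noncomputable section

section Aux

open Filter NNReal

variable {Ω : Type*} {m0 : MeasurableSpace Ω} {μ : Measure Ω} [IsProbabilityMeasure μ]

lemma integrable_mul_L2' {f g : Ω → ℝ} (hf : MemLp f 2 μ) (hg : MemLp g 2 μ) :
    Integrable (fun ω => f ω * g ω) μ := by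
  have h := hf.smul hg (p := 2) (q := 2) (r := 1)
  rw [← memLp_one_iff_integrable]
  exact (by simpa [smul_eq_mul, mul_comm] using h : MemLp (f * g) 1 μ)

lemma integrable_hinge' {q : Ω → ℝ} (hq : Integrable q μ) (hqm : Measurable[m0] q) (c ε : ℝ) :
    Integrable (fun ω => max (c + ε * q ω) 0) μ := by
  refine Integrable.mono' ((integrable_const |c|).add ((hq.abs).const_mul |ε|))
    ((measurable_const.add (hqm.const_mul ε)).max measurable_const).aestronglyMeasurable
    (ae_of_all _ fun ω => ?_)
  rw [Real.norm_eq_abs, abs_of_nonneg (le_max_right _ _)]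
  calc max (c + ε * q ω) 0 ≤ |c + ε * q ω| := max_le (le_abs_self _) (abs_nonneg _)
    _ ≤ |c| + |ε| * |q ω| := by rw [← abs_mul]; exact abs_add_le _ _

lemma condExp_affine_hinge {m : MeasurableSpace Ω} (hm : m ≤ m0) [SigmaFinite (μ.trim hm)]
    (c ε : ℝ) {f : Ω → ℝ} (hf : Integrable f μ)
    (hmax : Integrable (fun ω => max (c + ε * f ω) 0) μ) :
    (fun ω => max (c + ε * (μ[f|m]) ω) 0) ≤ᵐ[μ] μ[fun ω => max (c + ε * f ω) 0|m] := by
  have haff : Integrable (fun ω => c + ε * f ω) μ := (integrable_const c).add (hf.const_mul ε)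
  have h1 : μ[fun ω => c + ε * f ω|m] =ᵐ[μ] fun ω => c + ε * (μ[f|m]) ω := by
    have ha : μ[(fun _ : Ω => c) + ε • f|m] =ᵐ[μ] μ[(fun _ : Ω => c)|m] + μ[ε • f|m] :=
      condExp_add (integrable_const c) (hf.smul ε) m
    have hs : μ[ε • f|m] =ᵐ[μ] ε • μ[f|m] := condExp_smul ε f m
    filter_upwards [ha, hs] with ω e1 e2
    have hc : (μ[(fun _ : Ω => c)|m]) ω = c := by rw [condExp_const hm]
    calc (μ[fun ω => c + ε * f ω|m]) ω = (μ[(fun _ : Ω => c) + ε • f|m]) ω := rfl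
      _ = (μ[(fun _ : Ω => c)|m]) ω + (μ[ε • f|m]) ω := e1
      _ = c + ε * (μ[f|m]) ω := by rw [hc, e2]; simp [smul_eq_mul]
  have h2 : μ[fun ω => c + ε * f ω|m] ≤ᵐ[μ] μ[fun ω => max (c + ε * f ω) 0|m] :=
    condExp_mono haff hmax (ae_of_all _ fun ω => le_max_left _ _)
  have h3 : (0 : Ω → ℝ) ≤ᵐ[μ] μ[fun ω => max (c + ε * f ω) 0|m] :=
    condExp_nonneg (ae_of_all _ fun ω => le_max_right _ _)
  filter_upwards [h1, h2, h3] with ω e1 e2 e3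
  exact max_le (by rw [← e1]; exact e2) e3

lemma ci_integral_eq {α : Type*} [MeasurableSpace α] {Y : Ω → ℝ} {X : Ω → α}
    (hY : Measurable[m0] Y) (hX : Measurable[m0] X) {m : MeasurableSpace Ω}
    (hm : m ≤ m0) (hCI : @CondIndepBdd Ω α m0 _ μ m Y X)
    {g : ℝ → ℝ} (hg : Measurable g) (hg0 : ∀ x, 0 ≤ g x) (hg1 : ∀ x, g x ≤ 1)
    {ψ : α → ℝ} (hψ : Measurable ψ) (hψ0 : ∀ x, 0 ≤ ψ x)
    (hint : Integrable (fun ω => ψ (X ω)) μ) :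
    ∫ ω, g (Y ω) * ψ (X ω) ∂μ
      = ∫ ω, (μ[fun ω' => g (Y ω')|m]) ω * (μ[fun ω' => ψ (X ω')|m]) ω ∂μ := by
  set ψn : ℕ → α → ℝ := fun n x => min (ψ x) n with hψn_def
  have hψn_meas : ∀ n, Measurable (ψn n) := fun n => hψ.min measurable_const
  have hψn_nonneg : ∀ n x, 0 ≤ ψn n x := fun n x => le_min (hψ0 x) (Nat.cast_nonneg n)
  have hψn_le : ∀ n x, ψn n x ≤ ψ x := fun n x => min_le_left _ _
  have hgb : ∀ x, |g x| ≤ 1 := fun x => abs_le.2 ⟨by linarith [hg0 x], hg1 x⟩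
  have hψnX_int : ∀ n, Integrable (fun ω => ψn n (X ω)) μ := fun n =>
    hint.mono' ((hψn_meas n).comp hX).aestronglyMeasurable
      (ae_of_all _ fun ω => by
        rw [Real.norm_eq_abs, abs_of_nonneg (hψn_nonneg n _)]; exact hψn_le n _)
  have hprod_int : ∀ n, Integrable (fun ω => g (Y ω) * ψn n (X ω)) μ := fun n =>
    hint.mono' (((hg.comp hY).mul ((hψn_meas n).comp hX)).aestronglyMeasurable)
      (ae_of_all _ fun ω => by
        rw [Real.norm_eq_abs, abs_mul, abs_of_nonneg (hg0 _), abs_of_nonneg (hψn_nonneg n _)]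
        calc g (Y ω) * ψn n (X ω) ≤ 1 * ψn n (X ω) :=
              mul_le_mul_of_nonneg_right (hg1 _) (hψn_nonneg n _)
          _ = ψn n (X ω) := one_mul _
          _ ≤ ψ (X ω) := hψn_le n _)
  have step : ∀ n, ∫ ω, g (Y ω) * ψn n (X ω) ∂μ
      = ∫ ω, (μ[fun ω' => g (Y ω')|m]) ω * (μ[fun ω' => ψn n (X ω')|m]) ω ∂μ := by
    intro n
    have h := hCI g (ψn n) hg (hψn_meas n) ⟨1, hgb⟩
      ⟨n, fun x => abs_le.2 ⟨by linarith [hψn_nonneg n x], min_le_right _ _⟩⟩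
    calc ∫ ω, g (Y ω) * ψn n (X ω) ∂μ
        = ∫ ω, (μ[fun ω => g (Y ω) * ψn n (X ω)|m]) ω ∂μ := (integral_condExp hm).symm
      _ = _ := integral_congr_ae h
  set G : Ω → ℝ := μ[fun ω' => g (Y ω')|m] with hG_def
  set Ψ : Ω → ℝ := μ[fun ω' => ψ (X ω')|m] with hΨ_def
  set Ψn : ℕ → Ω → ℝ := fun n => μ[fun ω' => ψn n (X ω')|m] with hΨn_def
  have hGbd : ∀ᵐ ω ∂μ, |G ω| ≤ ((1 : ℝ≥0) : ℝ) :=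
    ae_bdd_condExp_of_ae_bdd (ae_of_all _ fun ω => by simpa using hgb (Y ω))
  have hG_sm := (stronglyMeasurable_condExp (f := fun ω' => g (Y ω')) (m := m) (μ := μ)).mono hm
  have hGΨ_int : ∀ {F : Ω → ℝ}, Integrable F μ → Integrable (fun ω => G ω * F ω) μ := by
    intro F hF
    exact hF.bdd_mul (c := ((1 : ℝ≥0) : ℝ)) hG_sm.aestronglyMeasurable
      (hGbd.mono fun ω h => by simpa using h)
  have hL : Tendsto (fun n => ∫ ω, g (Y ω) * ψn n (X ω) ∂μ) atTop
      (nhds (∫ ω, g (Y ω) * ψ (X ω) ∂μ)) := by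
    refine tendsto_integral_of_dominated_convergence (fun ω => ψ (X ω))
      (fun n => (hprod_int n).1) hint
      (fun n => ae_of_all _ fun ω => ?_) (ae_of_all _ fun ω => ?_)
    · rw [Real.norm_eq_abs, abs_mul, abs_of_nonneg (hg0 _), abs_of_nonneg (hψn_nonneg n _)]
      calc g (Y ω) * ψn n (X ω) ≤ 1 * ψn n (X ω) :=
            mul_le_mul_of_nonneg_right (hg1 _) (hψn_nonneg n _)
        _ ≤ ψ (X ω) := by rw [one_mul]; exact hψn_le n _
    · refine Tendsto.congr' ?_ tendsto_const_nhds
      filter_upwards [eventually_ge_atTop ⌈ψ (X ω)⌉₊] with n hn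
      have : ψ (X ω) ≤ (n : ℝ) := (Nat.le_ceil _).trans (Nat.cast_le.2 hn)
      simp [hψn_def, min_eq_left this]
  have hdiff : Tendsto (fun n => ∫ ω, (ψ (X ω) - ψn n (X ω)) ∂μ) atTop (nhds 0) := by
    have h0 : (0 : ℝ) = ∫ ω, (0 : ℝ) ∂μ := by simp
    rw [h0]
    refine tendsto_integral_of_dominated_convergence (fun ω => ψ (X ω))
      (fun n => (hint.sub (hψnX_int n)).1) hint
      (fun n => ae_of_all _ fun ω => ?_) (ae_of_all _ fun ω => ?_)
    · rw [Real.norm_eq_abs, abs_of_nonneg (sub_nonneg.2 (hψn_le n _))]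
      have := hψn_nonneg n (X ω); linarith
    · refine Tendsto.congr' ?_ tendsto_const_nhds
      filter_upwards [eventually_ge_atTop ⌈ψ (X ω)⌉₊] with n hn
      have : ψ (X ω) ≤ (n : ℝ) := (Nat.le_ceil _).trans (Nat.cast_le.2 hn)
      simp [hψn_def, min_eq_left this]
  have key : ∀ n, |(∫ ω, G ω * Ψn n ω ∂μ) - ∫ ω, G ω * Ψ ω ∂μ|
      ≤ ∫ ω, (ψ (X ω) - ψn n (X ω)) ∂μ := by
    intro n
    have e1 : (∫ ω, G ω * Ψn n ω ∂μ) - ∫ ω, G ω * Ψ ω ∂μ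
        = ∫ ω, G ω * (Ψn n ω - Ψ ω) ∂μ := by
      rw [← integral_sub (hGΨ_int integrable_condExp) (hGΨ_int integrable_condExp)]
      congr 1; ext ω; ring
    rw [e1]
    have e2 : ∀ᵐ ω ∂μ, |G ω * (Ψn n ω - Ψ ω)| ≤ |Ψn n ω - Ψ ω| := by
      filter_upwards [hGbd] with ω h
      rw [abs_mul]
      calc |G ω| * |Ψn n ω - Ψ ω| ≤ 1 * |Ψn n ω - Ψ ω| :=
            mul_le_mul_of_nonneg_right (by simpa using h) (abs_nonneg _)
        _ = _ := one_mul _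
    have hint1 : Integrable (fun ω => G ω * (Ψn n ω - Ψ ω)) μ :=
      hGΨ_int (integrable_condExp.sub integrable_condExp)
    calc |∫ ω, G ω * (Ψn n ω - Ψ ω) ∂μ| ≤ ∫ ω, |G ω * (Ψn n ω - Ψ ω)| ∂μ := by
          have := norm_integral_le_integral_norm (μ := μ) (fun ω => G ω * (Ψn n ω - Ψ ω))
          simpa [Real.norm_eq_abs, ← abs_mul] using this
      _ ≤ ∫ ω, |Ψn n ω - Ψ ω| ∂μ :=
          integral_mono_ae hint1.abs (integrable_condExp.sub integrable_condExp).abs e2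
      _ = ∫ ω, |(μ[(fun ω' => ψn n (X ω')) - fun ω' => ψ (X ω')|m]) ω| ∂μ := by
          refine integral_congr_ae ?_
          filter_upwards [condExp_sub (μ := μ) (m := m) (hψnX_int n) hint] with ω h
          rw [show Ψn n ω - Ψ ω = ((Ψn n) - Ψ) ω from rfl, ← h]
      _ ≤ ∫ ω, |((fun ω' => ψn n (X ω')) - fun ω' => ψ (X ω')) ω| ∂μ :=
          integral_abs_condExp_le _
      _ = ∫ ω, (ψ (X ω) - ψn n (X ω)) ∂μ := by
          refine integral_congr_ae (ae_of_all _ fun ω => ?_)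
          simp only [Pi.sub_apply]
          rw [abs_sub_comm, abs_of_nonneg (sub_nonneg.2 (hψn_le n _))]
  have hR : Tendsto (fun n => ∫ ω, G ω * Ψn n ω ∂μ) atTop (nhds (∫ ω, G ω * Ψ ω ∂μ)) := by
    rw [tendsto_iff_dist_tendsto_zero]
    refine squeeze_zero (fun n => dist_nonneg) (fun n => ?_) hdiff
    rw [Real.dist_eq]; exact key n
  exact tendsto_nhds_unique (hL.congr step) hR

end Aux

/-- **Theorem 1 (unbiasedness of the PSMM at the population level).**
Under conditional independence `Y ⫫ X | σ(UᵀXV)` and the bilinearity condition, any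
minimizer `(u*, v*, t*)` of the population objective `L` satisfies
`u*ᵀXv* = E[u*ᵀXv* | σ(UᵀXV)]` a.s.; equivalently `u*ᵀXv* = (Uη_r)ᵀX(Vη_c)` a.s.
for some `η_r`, `η_c`. -/
theorem stmt_8 {Ω : Type*} [MeasurableSpace Ω] {μ : Measure Ω} [IsProbabilityMeasure μ]
    {d₁ d₂ r₁ r₂ : ℕ}
    (X : Ω → Matrix (Fin d₁) (Fin d₂) ℝ) (hX : Measurable X)
    (hXL2 : ∀ i j, MemLp (fun ω => X ω i j) 2 μ)
    (hXmean : ∀ i j, ∫ ω, X ω i j ∂μ = 0)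
    (Y : Ω → ℝ) (hY : Measurable Y)
    (A₁ A₂ : Set ℝ) (hA₁ : MeasurableSet A₁) (hA₂ : MeasurableSet A₂)
    (hdisj : Disjoint A₁ A₂)
    (lam : ℝ) (hlam : 0 ≤ lam)
    (U : Matrix (Fin d₁) (Fin r₁) ℝ) (V : Matrix (Fin d₂) (Fin r₂) ℝ)
    (hCI : CondIndepBdd μ
      (MeasurableSpace.comap (fun ω => Uᵀ * X ω * V) inferInstance) Y X)
    (hbilinear : ∀ (u : Fin d₁ → ℝ) (v : Fin d₂ → ℝ),
      ∃ (ηr : Fin r₁ → ℝ) (ηc : Fin r₂ → ℝ),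
        μ[fun ω => bilin u (X ω) v |
            MeasurableSpace.comap (fun ω => Uᵀ * X ω * V) inferInstance]
          =ᵐ[μ] fun ω => bilin (U.mulVec ηr) (X ω) (V.mulVec ηc))
    (ustar : Fin d₁ → ℝ) (vstar : Fin d₂ → ℝ) (tstar : ℝ)
    (hmin : ∀ (u : Fin d₁ → ℝ) (v : Fin d₂ → ℝ) (t : ℝ),
      PSMMobj μ X (sliceLabel A₁ A₂ Y) lam ustar vstar tstar
        ≤ PSMMobj μ X (sliceLabel A₁ A₂ Y) lam u v t) :
    (fun ω => bilin ustar (X ω) vstar)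
      =ᵐ[μ] μ[fun ω => bilin ustar (X ω) vstar |
          MeasurableSpace.comap (fun ω => Uᵀ * X ω * V) inferInstance] ∧
    ∃ (ηr : Fin r₁ → ℝ) (ηc : Fin r₂ → ℝ),
      (fun ω => bilin ustar (X ω) vstar)
        =ᵐ[μ] fun ω => bilin (U.mulVec ηr) (X ω) (V.mulVec ηc) := by
  classical
  -- measurability of entries and of the compression map
  have hXkl : ∀ k l, Measurable fun ω => X ω k l := fun k l =>
    (measurable_pi_apply l).comp ((measurable_pi_apply k).comp hX)
  have hφ : Measurable (fun ω => Uᵀ * X ω * V) := by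
    refine measurable_pi_iff.mpr fun i => ?_
    refine measurable_pi_iff.mpr fun j => ?_
    simp only [Matrix.mul_apply]
    exact Finset.measurable_sum _ fun l _ =>
      (Finset.measurable_sum _ fun k _ => measurable_const.mul (hXkl k l)).mul measurable_const
  -- L² and measurability of bilinear forms
  have hbil2 : ∀ (u : Fin d₁ → ℝ) (v : Fin d₂ → ℝ),
      MemLp (fun ω => bilin u (X ω) v) 2 μ := by
    intro u v
    simp only [bilin]
    refine memLp_finset_sum _ fun i _ => memLp_finset_sum _ fun j _ => ?_
    exact MemLp.ae_eq (ae_of_all _ fun ω => by ring) ((hXL2 i j).const_mul (u i * v j))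
  have hbilmeas : ∀ (u : Fin d₁ → ℝ) (v : Fin d₂ → ℝ),
      Measurable (fun ω => bilin u (X ω) v) := by
    intro u v
    simp only [bilin]
    exact Finset.measurable_sum _ fun i _ => Finset.measurable_sum _ fun j _ =>
      (measurable_const.mul (hXkl i j)).mul measurable_const
  have hBmeas : ∀ (u : Fin d₁ → ℝ) (v : Fin d₂ → ℝ),
      Measurable (fun M : Matrix (Fin d₁) (Fin d₂) ℝ => bilin u M v) := by
    intro u v
    simp only [bilin]
    have hMij : ∀ i j, Measurable (fun M : Matrix (Fin d₁) (Fin d₂) ℝ => M i j) := fun i j =>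
      (measurable_pi_apply j).comp (measurable_pi_apply i)
    exact Finset.measurable_sum _ fun i _ => Finset.measurable_sum _ fun j _ =>
      (measurable_const.mul (hMij i j)).mul measurable_const
  -- slice indicator functions
  have hg₁meas : Measurable (fun x : ℝ => A₁.indicator (1 : ℝ → ℝ) x) :=
    measurable_one.indicator hA₁
  have hg₂meas : Measurable (fun x : ℝ => A₂.indicator (1 : ℝ → ℝ) x) :=
    measurable_one.indicator hA₂
  have hind01 : ∀ (A : Set ℝ) (x : ℝ), 0 ≤ A.indicator (1 : ℝ → ℝ) x
      ∧ A.indicator (1 : ℝ → ℝ) x ≤ 1 := by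
    intro A x
    by_cases h : x ∈ A <;> simp [Set.indicator_of_mem, Set.indicator_of_notMem, h]
  -- pointwise decomposition of the hinge loss
  have hdecomp : ∀ (z : ℝ) (ω : Ω), max (1 - sliceLabel A₁ A₂ Y ω * (z - tstar)) 0
      = A₁.indicator (1 : ℝ → ℝ) (Y ω) * max ((1 + tstar) + (-1) * z) 0
        + A₂.indicator (1 : ℝ → ℝ) (Y ω) * max ((1 - tstar) + 1 * z) 0
        + (1 - A₁.indicator (1 : ℝ → ℝ) (Y ω) - A₂.indicator (1 : ℝ → ℝ) (Y ω)) := by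
    intro z ω
    simp only [sliceLabel]
    by_cases h1 : Y ω ∈ A₁
    · have h2 : Y ω ∉ A₂ := fun h => Set.disjoint_left.mp hdisj h1 h
      simp only [Set.indicator_of_mem h1, Set.indicator_of_notMem h2, Pi.one_apply]
      rw [show (1 : ℝ) - (1 - 0) * (z - tstar) = (1 + tstar) + (-1) * z by ring]
      ring
    · by_cases h2 : Y ω ∈ A₂
      · simp only [Set.indicator_of_mem h2, Set.indicator_of_notMem h1, Pi.one_apply]
        rw [show (1 : ℝ) - (0 - 1) * (z - tstar) = (1 - tstar) + 1 * z by ring]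
        ring
      · simp only [Set.indicator_of_notMem h1, Set.indicator_of_notMem h2]
        rw [show (1 : ℝ) - (0 - 0) * (z - tstar) = 1 by ring]
        rw [max_eq_left (by norm_num : (0:ℝ) ≤ 1)]
        ring
  -- hinge decomposition at the level of integrals
  have hIg : ∀ (A : Set ℝ), MeasurableSet A →
      Integrable (fun ω => A.indicator (1 : ℝ → ℝ) (Y ω)) μ := by
    intro A hA
    refine Integrable.mono' (integrable_const 1)
      ((measurable_one.indicator hA).comp hY).aestronglyMeasurable
      (ae_of_all _ fun ω => ?_)
    rw [Real.norm_eq_abs, abs_of_nonneg (hind01 A (Y ω)).1]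
    exact (hind01 A (Y ω)).2
  have hingedecomp : ∀ (q : Ω → ℝ), Integrable q μ → Measurable q →
      ∫ ω, max (1 - sliceLabel A₁ A₂ Y ω * (q ω - tstar)) 0 ∂μ
        = (∫ ω, A₁.indicator (1 : ℝ → ℝ) (Y ω) * max ((1 + tstar) + (-1) * q ω) 0 ∂μ)
          + (∫ ω, A₂.indicator (1 : ℝ → ℝ) (Y ω) * max ((1 - tstar) + 1 * q ω) 0 ∂μ)
          + ∫ ω, (1 - A₁.indicator (1 : ℝ → ℝ) (Y ω) - A₂.indicator (1 : ℝ → ℝ) (Y ω)) ∂μ := by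
    intro q hqint hqm
    have I₁ : Integrable (fun ω => A₁.indicator (1 : ℝ → ℝ) (Y ω)
        * max ((1 + tstar) + (-1) * q ω) 0) μ :=
      (integrable_hinge' hqint hqm _ _).bdd_mul
        ((measurable_one.indicator hA₁).comp hY).aestronglyMeasurable
        (ae_of_all _ fun ω => by
          rw [Real.norm_eq_abs, abs_of_nonneg (hind01 A₁ (Y ω)).1]
          exact (hind01 A₁ (Y ω)).2) (c := 1)
    have I₂ : Integrable (fun ω => A₂.indicator (1 : ℝ → ℝ) (Y ω)
        * max ((1 - tstar) + 1 * q ω) 0) μ :=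
      (integrable_hinge' hqint hqm _ _).bdd_mul
        ((measurable_one.indicator hA₂).comp hY).aestronglyMeasurable
        (ae_of_all _ fun ω => by
          rw [Real.norm_eq_abs, abs_of_nonneg (hind01 A₂ (Y ω)).1]
          exact (hind01 A₂ (Y ω)).2) (c := 1)
    have I₀ : Integrable (fun ω => 1 - A₁.indicator (1 : ℝ → ℝ) (Y ω)
        - A₂.indicator (1 : ℝ → ℝ) (Y ω)) μ :=
      ((integrable_const 1).sub (hIg A₁ hA₁)).sub (hIg A₂ hA₂)
    have e : (fun ω => max (1 - sliceLabel A₁ A₂ Y ω * (q ω - tstar)) 0)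
        = fun ω => A₁.indicator (1 : ℝ → ℝ) (Y ω) * max ((1 + tstar) + (-1) * q ω) 0
          + A₂.indicator (1 : ℝ → ℝ) (Y ω) * max ((1 - tstar) + 1 * q ω) 0
          + (1 - A₁.indicator (1 : ℝ → ℝ) (Y ω) - A₂.indicator (1 : ℝ → ℝ) (Y ω)) :=
      funext fun ω => hdecomp (q ω) ω
    have I₁₂ : Integrable (fun ω => A₁.indicator (1 : ℝ → ℝ) (Y ω)
        * max ((1 + tstar) + (-1) * q ω) 0
          + A₂.indicator (1 : ℝ → ℝ) (Y ω) * max ((1 - tstar) + 1 * q ω) 0) μ := I₁.add I₂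
    rw [e, integral_add I₁₂ I₀, integral_add I₁ I₂]
  set m := MeasurableSpace.comap (fun ω => Uᵀ * X ω * V) inferInstance with hm_def
  have hm : m ≤ _ := hφ.comap_le
  haveI : SigmaFinite (μ.trim hm) := by infer_instance
  obtain ⟨ηr, ηc, hη⟩ := hbilinear ustar vstar
  have hM := hmin (U.mulVec ηr) (V.mulVec ηc) tstar
  simp only [PSMMobj] at hM
  set f : Ω → ℝ := fun ω => bilin ustar (X ω) vstar with hf_def
  set f' : Ω → ℝ := fun ω => bilin (U.mulVec ηr) (X ω) (V.mulVec ηc) with hf'_def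
  have hf2 : MemLp f 2 μ := hbil2 ustar vstar
  have hf'2 : MemLp f' 2 μ := hbil2 (U.mulVec ηr) (V.mulVec ηc)
  have hfmeas := hbilmeas ustar vstar
  have hf'meas := hbilmeas (U.mulVec ηr) (V.mulVec ηc)
  have hfint : Integrable f μ := hf2.integrable one_le_two
  have hf'int : Integrable f' μ := hf'2.integrable one_le_two
  have hfbar2 : MemLp (μ[f|m]) 2 μ := MemLp.ae_eq hη.symm hf'2
  have hfbar_meas := ((stronglyMeasurable_condExp (f := f) (μ := μ) (m := m)).mono hm).measurable
  have hfbarint : Integrable (μ[f|m]) μ := integrable_condExp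
  -- variance identity
  have hmean : ∫ ω, (μ[f|m]) ω ∂μ = ∫ ω, f ω ∂μ := integral_condExp hm
  have hmean' : ∫ ω, f' ω ∂μ = ∫ ω, f ω ∂μ := (integral_congr_ae hη).symm.trans hmean
  have hcross : ∫ ω, (μ[f|m]) ω * f ω ∂μ = ∫ ω, (μ[f|m]) ω * (μ[f|m]) ω ∂μ := by
    have hmul : Integrable ((μ[f|m]) * f) μ := integrable_mul_L2' hfbar2 hf2
    have h := condExp_mul_of_stronglyMeasurable_left (μ := μ) (m := m)
      stronglyMeasurable_condExp hmul hfint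
    calc ∫ ω, (μ[f|m]) ω * f ω ∂μ
        = ∫ ω, (μ[(μ[f|m]) * f|m]) ω ∂μ := (integral_condExp hm).symm
      _ = ∫ ω, ((μ[f|m]) * μ[f|m]) ω ∂μ := integral_congr_ae h
      _ = _ := rfl
  have hsq_f : Integrable (fun ω => f ω ^ 2) μ := hf2.integrable_sq
  have hsq_fbar : Integrable (fun ω => (μ[f|m]) ω ^ 2) μ := hfbar2.integrable_sq
  have hD_int : Integrable (fun ω => (f ω - (μ[f|m]) ω) ^ 2) μ := (hf2.sub hfbar2).integrable_sq
  set D := ∫ ω, (f ω - (μ[f|m]) ω) ^ 2 ∂μ with hD_def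
  have hD_eq : D = (∫ ω, f ω ^ 2 ∂μ) - ∫ ω, (μ[f|m]) ω ^ 2 ∂μ := by
    have hmulint : Integrable (fun ω => (μ[f|m]) ω * f ω) μ := integrable_mul_L2' hfbar2 hf2
    have e1 : D = ∫ ω, (f ω ^ 2 - 2 * ((μ[f|m]) ω * f ω) + (μ[f|m]) ω ^ 2) ∂μ :=
      integral_congr_ae (ae_of_all _ fun ω => by ring)
    have hI2 : Integrable (fun ω => 2 * ((μ[f|m]) ω * f ω)) μ := hmulint.const_mul 2
    have hI12 : Integrable (fun ω => f ω ^ 2 - 2 * ((μ[f|m]) ω * f ω)) μ := hsq_f.sub hI2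
    rw [e1, integral_add hI12 hsq_fbar, integral_sub hsq_f hI2, integral_const_mul, hcross]
    have e2 : ∫ ω, (μ[f|m]) ω * (μ[f|m]) ω ∂μ = ∫ ω, (μ[f|m]) ω ^ 2 ∂μ :=
      integral_congr_ae (ae_of_all _ fun ω => by ring)
    rw [e2]; ring
  have hvar : variance f μ = variance f' μ + D := by
    rw [variance_eq_sub hf2, variance_eq_sub hf'2]
    simp only [Pi.pow_apply]
    have e2 : ∫ ω, f' ω ^ 2 ∂μ = ∫ ω, (μ[f|m]) ω ^ 2 ∂μ :=
      integral_congr_ae (hη.symm.mono fun ω e => by simp only [e])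
    rw [e2, hmean', hD_eq]; ring
  -- integral comparison for each slice
  have hside : ∀ (A : Set ℝ) (hA : MeasurableSet A) (c ε : ℝ) (hε : ε = -1 ∨ ε = 1),
      ∫ ω, A.indicator (1 : ℝ → ℝ) (Y ω) * max (c + ε * f' ω) 0 ∂μ
        ≤ ∫ ω, A.indicator (1 : ℝ → ℝ) (Y ω) * max (c + ε * f ω) 0 ∂μ := by
    intro A hA c ε hε
    have hgm : Measurable (fun x : ℝ => A.indicator (1 : ℝ → ℝ) x) :=
      measurable_one.indicator hA
    have hg0 : ∀ x, 0 ≤ A.indicator (1 : ℝ → ℝ) x := fun x => (hind01 A x).1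
    have hg1 : ∀ x, A.indicator (1 : ℝ → ℝ) x ≤ 1 := fun x => (hind01 A x).2
    have hψmeas : Measurable (fun M : Matrix (Fin d₁) (Fin d₂) ℝ =>
        max (c + ε * bilin ustar M vstar) 0) :=
      (measurable_const.add ((hBmeas ustar vstar).const_mul ε)).max measurable_const
    have hψ'meas : Measurable (fun M : Matrix (Fin d₁) (Fin d₂) ℝ =>
        max (c + ε * bilin (U.mulVec ηr) M (V.mulVec ηc)) 0) :=
      (measurable_const.add ((hBmeas (U.mulVec ηr) (V.mulVec ηc)).const_mul ε)).max
        measurable_const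
    have hψint : Integrable (fun ω => max (c + ε * f ω) 0) μ :=
      integrable_hinge' hfint hfmeas c ε
    have hψ'int : Integrable (fun ω => max (c + ε * f' ω) 0) μ :=
      integrable_hinge' hf'int hf'meas c ε
    have E1 : ∫ ω, A.indicator (1 : ℝ → ℝ) (Y ω) * max (c + ε * f ω) 0 ∂μ
        = ∫ ω, (μ[fun ω' => A.indicator (1 : ℝ → ℝ) (Y ω')|m]) ω
            * (μ[fun ω' => max (c + ε * f ω') 0|m]) ω ∂μ :=
      ci_integral_eq hY hX hm hCI hgm hg0 hg1 hψmeas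
        (fun M => le_max_right _ _) hψint
    have E1' : ∫ ω, A.indicator (1 : ℝ → ℝ) (Y ω) * max (c + ε * f' ω) 0 ∂μ
        = ∫ ω, (μ[fun ω' => A.indicator (1 : ℝ → ℝ) (Y ω')|m]) ω
            * (μ[fun ω' => max (c + ε * f' ω') 0|m]) ω ∂μ :=
      ci_integral_eq hY hX hm hCI hgm hg0 hg1 hψ'meas
        (fun M => le_max_right _ _) hψ'int
    have hC : (fun ω => max (c + ε * (μ[f|m]) ω) 0)
        ≤ᵐ[μ] μ[fun ω => max (c + ε * f ω) 0|m] :=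
      condExp_affine_hinge hm c ε hfint hψint
    have hcexp' : μ[fun ω' => max (c + ε * f' ω') 0|m]
        =ᵐ[μ] fun ω => max (c + ε * (μ[f|m]) ω) 0 := by
      have h1 : (fun ω' => max (c + ε * f' ω') 0)
          =ᵐ[μ] fun ω' => max (c + ε * (μ[f|m]) ω') 0 :=
        hη.symm.mono fun ω e => by simp only [e]
      refine (condExp_congr_ae h1).trans ?_
      have hsm : StronglyMeasurable[m] (fun ω => max (c + ε * (μ[f|m]) ω) 0) := by
        have hmf : Measurable[m] (μ[f|m]) := stronglyMeasurable_condExp.measurable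
        exact ((measurable_const.add (hmf.const_mul ε)).max measurable_const).stronglyMeasurable
      rw [condExp_of_stronglyMeasurable hm hsm
        (integrable_hinge' hfbarint hfbar_meas c ε)]
    have hGpos : (0 : Ω → ℝ) ≤ᵐ[μ] μ[fun ω' => A.indicator (1 : ℝ → ℝ) (Y ω')|m] :=
      condExp_nonneg (ae_of_all _ fun ω => hg0 _)
    have hGbd : ∀ᵐ ω ∂μ, |(μ[fun ω' => A.indicator (1 : ℝ → ℝ) (Y ω')|m]) ω|
        ≤ ((1 : NNReal) : ℝ) :=
      ae_bdd_condExp_of_ae_bdd (ae_of_all _ fun ω => by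
        simpa using abs_le.2 ⟨by linarith [hg0 (Y ω)], hg1 (Y ω)⟩)
    have hGsm :=
      ((stronglyMeasurable_condExp (f := fun ω' => A.indicator (1 : ℝ → ℝ) (Y ω')) (m := m)
        (μ := μ)).mono hm).aestronglyMeasurable (μ := μ)
    have hint1 : Integrable (fun ω => (μ[fun ω' => A.indicator (1 : ℝ → ℝ) (Y ω')|m]) ω
        * max (c + ε * (μ[f|m]) ω) 0) μ :=
      (integrable_hinge' hfbarint hfbar_meas c ε).bdd_mul (c := ((1 : NNReal) : ℝ)) hGsm
        (hGbd.mono fun ω h => by simpa using h)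
    have hint2 : Integrable (fun ω => (μ[fun ω' => A.indicator (1 : ℝ → ℝ) (Y ω')|m]) ω
        * (μ[fun ω' => max (c + ε * f ω') 0|m]) ω) μ :=
      integrable_condExp.bdd_mul (c := ((1 : NNReal) : ℝ)) hGsm
        (hGbd.mono fun ω h => by simpa using h)
    have hmono : ∫ ω, (μ[fun ω' => A.indicator (1 : ℝ → ℝ) (Y ω')|m]) ω
          * max (c + ε * (μ[f|m]) ω) 0 ∂μ
        ≤ ∫ ω, (μ[fun ω' => A.indicator (1 : ℝ → ℝ) (Y ω')|m]) ω
          * (μ[fun ω' => max (c + ε * f ω') 0|m]) ω ∂μ := by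
      refine integral_mono_ae hint1 hint2 ?_
      filter_upwards [hGpos, hC] with ω e1 e2
      exact mul_le_mul_of_nonneg_left e2 e1
    have hswap : ∫ ω, (μ[fun ω' => A.indicator (1 : ℝ → ℝ) (Y ω')|m]) ω
          * (μ[fun ω' => max (c + ε * f' ω') 0|m]) ω ∂μ
        = ∫ ω, (μ[fun ω' => A.indicator (1 : ℝ → ℝ) (Y ω')|m]) ω
          * max (c + ε * (μ[f|m]) ω) 0 ∂μ := by
      refine integral_congr_ae ?_
      filter_upwards [hcexp'] with ω e
      rw [e]
    rw [E1, E1', hswap]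
    exact hmono
  -- compare hinge risks
  have hinge_ge : ∫ ω, max (1 - sliceLabel A₁ A₂ Y ω * (f' ω - tstar)) 0 ∂μ
      ≤ ∫ ω, max (1 - sliceLabel A₁ A₂ Y ω * (f ω - tstar)) 0 ∂μ := by
    rw [hingedecomp f hfint hfmeas, hingedecomp f' hf'int hf'meas]
    have h1 := hside A₁ hA₁ (1 + tstar) (-1) (Or.inl rfl)
    have h2 := hside A₂ hA₂ (1 - tstar) 1 (Or.inr rfl)
    linarith
  -- conclude via minimality
  have hM' : variance f μ + lam * ∫ ω, max (1 - sliceLabel A₁ A₂ Y ω * (f ω - tstar)) 0 ∂μ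
      ≤ variance f' μ + lam * ∫ ω, max (1 - sliceLabel A₁ A₂ Y ω * (f' ω - tstar)) 0 ∂μ := hM
  have hmul := mul_le_mul_of_nonneg_left hinge_ge hlam
  have hD0 : D ≤ 0 := by linarith
  have hDnn : 0 ≤ D := integral_nonneg fun ω => sq_nonneg _
  have hae : (fun ω => (f ω - (μ[f|m]) ω) ^ 2) =ᵐ[μ] 0 :=
    (integral_eq_zero_iff_of_nonneg (fun ω => sq_nonneg _) hD_int).mp (le_antisymm hD0 hDnn)
  have hfeq : f =ᵐ[μ] μ[f|m] := by
    filter_upwards [hae] with ω h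
    have h0 : (f ω - (μ[f|m]) ω) ^ 2 = 0 := h
    have := (pow_eq_zero_iff (by norm_num : (2:ℕ) ≠ 0)).mp h0
    linarith [sub_eq_zero.mp this]
  exact ⟨hfeq, ηr, ηc, hfeq.trans hη⟩
end
end

section
/- Let Σ_r ∈ Matrix (Fin d₁) (Fin d₁) ℝ, Σ_c ∈ Matrix (Fin d₂) (Fin d₂) ℝ be symmetric positive definite, X₁, …, X_n ∈ Matrix (Fin d₁) (Fin d₂) ℝ with mean X̄, labels Ỹ₁, …, Ỹ_n ∈ {−1, 1}, λ > 0, and fix v ∈ ℝ^{d₂} with v ≠ 0. Suppose (u*, t*) minimizes over (u, t) ∈ ℝ^{d₁} × ℝ the function (uᵀΣ_r u)(vᵀΣ_c v) + (λ/n)·Σᵢ (1 − Ỹᵢ(uᵀ(Xᵢ − X̄)v − t))₊. Then there exist α₁, …, α_n ∈ ℝ with 0 ≤ αᵢ ≤ λ/n for all i and Σᵢ αᵢỸᵢ = 0, such that u* = (1/2)·Σᵢ (αᵢỸᵢ)·Σ_r⁻¹(Xᵢ − X̄)v / (vᵀΣ_c v), and (α₁, …, α_n) minimizes the dual objective −Σᵢ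 αᵢ + (1/4)·Σᵢ Σⱼ αᵢαⱼỸᵢỸⱼ·((Xᵢ − X̄)v)ᵀΣ_r⁻¹((Xⱼ − X̄)v)/(vᵀΣ_c v) over all α satisfying these constraints. -/
open Matrix

noncomputable section

/-- Sample mean of data matrices. -/
def sampleMean {n d₁ d₂ : ℕ} (X : Fin n → Matrix (Fin d₁) (Fin d₂) ℝ) :
    Matrix (Fin d₁) (Fin d₂) ℝ :=
  (n : ℝ)⁻¹ • ∑ i, X i

namespace Stmt11Aux

lemma bilin_eq {d₁ d₂ : ℕ} (u : Fin d₁ → ℝ) (M : Matrix (Fin d₁) (Fin d₂) ℝ) (v : Fin d₂ → ℝ) :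
    bilin u M v = u ⬝ᵥ M.mulVec v := by
  unfold bilin
  simp [dotProduct, Matrix.mulVec, Finset.mul_sum, mul_assoc]

lemma sum_dotProduct' {n d : ℕ} (f : Fin n → Fin d → ℝ) (y : Fin d → ℝ) :
    (∑ i, f i) ⬝ᵥ y = ∑ i, f i ⬝ᵥ y := by
  simp only [dotProduct, Finset.sum_apply, Finset.sum_mul]
  rw [Finset.sum_comm]

lemma dotProduct_sum' {n d : ℕ} (y : Fin d → ℝ) (f : Fin n → Fin d → ℝ) :
    y ⬝ᵥ (∑ i, f i) = ∑ i, y ⬝ᵥ f i := by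
  simp only [dotProduct, Finset.sum_apply, Finset.mul_sum]
  rw [Finset.sum_comm]

lemma mulVec_sum' {n d e : ℕ} (M : Matrix (Fin e) (Fin d) ℝ) (f : Fin n → Fin d → ℝ) :
    M.mulVec (∑ i, f i) = ∑ i, M.mulVec (f i) :=
  map_sum M.mulVecLin f Finset.univ

variable {d : ℕ} {S : Matrix (Fin d) (Fin d) ℝ}

lemma symm_dot (hS : Sᵀ = S) (u w : Fin d → ℝ) :
    u ⬝ᵥ S.mulVec w = S.mulVec u ⬝ᵥ w := by
  rw [Matrix.dotProduct_mulVec, ← Matrix.mulVec_transpose, hS]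

lemma posdef_symm (hS : S.PosDef) : Sᵀ = S := by
  have := hS.isHermitian; simpa [Matrix.IsHermitian] using this

lemma inv_mulVec_mulVec (hS : S.PosDef) (x : Fin d → ℝ) :
    S⁻¹.mulVec (S.mulVec x) = x := by
  rw [Matrix.mulVec_mulVec, Matrix.nonsing_inv_mul S hS.det_pos.ne'.isUnit, Matrix.one_mulVec]

lemma mulVec_inv_mulVec (hS : S.PosDef) (x : Fin d → ℝ) :
    S.mulVec (S⁻¹.mulVec x) = x := by
  rw [Matrix.mulVec_mulVec, Matrix.mul_nonsing_inv S hS.det_pos.ne'.isUnit, Matrix.one_mulVec]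

/-- `min_u  c uᵀSu - uᵀw  = -wᵀS⁻¹w/(4c)`. -/
lemma quad_lower (hS : S.PosDef) {c : ℝ} (hc : 0 < c) (u w : Fin d → ℝ) :
    -(w ⬝ᵥ S⁻¹.mulVec w) / (4 * c) ≤ c * (u ⬝ᵥ S.mulVec u) - u ⬝ᵥ w := by
  set u₀ : Fin d → ℝ := (2 * c)⁻¹ • S⁻¹.mulVec w with hu₀
  have h0 : 0 ≤ (u - u₀) ⬝ᵥ S.mulVec (u - u₀) := by simpa using hS.posSemidef.dotProduct_mulVec_nonneg (u - u₀)
  have hSu₀ : S.mulVec u₀ = (2 * c)⁻¹ • w := by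
    rw [hu₀, Matrix.mulVec_smul, mulVec_inv_mulVec hS]
  have hexp : (u - u₀) ⬝ᵥ S.mulVec (u - u₀)
      = u ⬝ᵥ S.mulVec u - 2 * ((2 * c)⁻¹ * (u ⬝ᵥ w)) + (2 * c)⁻¹ * ((2*c)⁻¹ * (w ⬝ᵥ S⁻¹.mulVec w)) := by
    have hsymm := posdef_symm hS
    have h1 : u₀ ⬝ᵥ S.mulVec u = u ⬝ᵥ S.mulVec u₀ := by
      rw [symm_dot hsymm, dotProduct_comm]
    have h2 : u ⬝ᵥ S.mulVec u₀ = (2 * c)⁻¹ * (u ⬝ᵥ w) := by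
      rw [hSu₀, dotProduct_smul]; simp [smul_eq_mul]
    have h3 : u₀ ⬝ᵥ S.mulVec u₀ = (2 * c)⁻¹ * ((2*c)⁻¹ * (w ⬝ᵥ S⁻¹.mulVec w)) := by
      rw [hSu₀, dotProduct_smul, hu₀, smul_dotProduct]
      simp [smul_eq_mul, dotProduct_comm w]
    rw [Matrix.mulVec_sub, dotProduct_sub, sub_dotProduct, sub_dotProduct, h1, h2, h3]
    ring
  rw [hexp] at h0
  have h2c : (2 * c) ≠ 0 := by positivity
  rw [div_le_iff₀ (by positivity : (0:ℝ) < 4 * c)]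
  have he : c * (2*c)⁻¹ = 1/2 := by
    rw [mul_inv_eq_iff_eq_mul₀ h2c]; ring
  set e := (2*c)⁻¹
  set P := u ⬝ᵥ S.mulVec u
  set W := w ⬝ᵥ S⁻¹.mulVec w
  set U := u ⬝ᵥ w
  have key := mul_le_mul_of_nonneg_left h0 (show (0:ℝ) ≤ 4*c^2 by positivity)
  have h1 : 4*c^2 * (P - 2 * (e * U) + e * (e * W)) = 4*c^2*P - 8*(c*e)*(c*U) + 4*((c*e)*(c*e))*W := by ring
  rw [mul_zero] at key
  rw [h1, he] at key
  nlinarith [key]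

/-- bilinearity of the double sum. -/
lemma double_sum_eq {n : ℕ} (M : Matrix (Fin d) (Fin d) ℝ) (γ : Fin n → ℝ) (A : Fin n → Fin d → ℝ) :
    ∑ i, ∑ j, γ i * γ j * (A i ⬝ᵥ M.mulVec (A j))
      = (∑ i, γ i • A i) ⬝ᵥ M.mulVec (∑ j, γ j • A j) := by
  rw [sum_dotProduct']
  refine Finset.sum_congr rfl fun i _ => ?_
  rw [smul_dotProduct]
  have h1 : M.mulVec (∑ j, γ j • A j) = ∑ j, γ j • M.mulVec (A j) := by
    rw [mulVec_sum']
    exact Finset.sum_congr rfl fun j _ => Matrix.mulVec_smul M (γ j) (A j)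
  rw [h1, dotProduct_sum']
  simp only [smul_eq_mul, dotProduct_smul, Finset.mul_sum]
  exact Finset.sum_congr rfl fun j _ => by ring


set_option maxHeartbeats 2000000 in
lemma kkt_exists {n d : ℕ} (hn : 0 < n) {S : Matrix (Fin d) (Fin d) ℝ} (hS : S.PosDef)
    {c : ℝ} (hc : 0 < c) (A : Fin n → Fin d → ℝ) (Y : Fin n → ℝ)
    {lam : ℝ} (hlam : 0 < lam)
    (ustar : Fin d → ℝ) (tstar : ℝ)
    (hmin : ∀ (u : Fin d → ℝ) (t : ℝ),
      (ustar ⬝ᵥ S.mulVec ustar) * c + lam / n * ∑ i, max (1 - Y i * (ustar ⬝ᵥ A i - tstar)) 0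
      ≤ (u ⬝ᵥ S.mulVec u) * c + lam / n * ∑ i, max (1 - Y i * (u ⬝ᵥ A i - t)) 0) :
    ∃ a : Fin n → ℝ,
      (∀ i, 0 ≤ a i ∧ a i ≤ lam / n) ∧
      (∀ i, 0 < 1 - Y i * (ustar ⬝ᵥ A i - tstar) → a i = lam / n) ∧
      (∀ i, 1 - Y i * (ustar ⬝ᵥ A i - tstar) < 0 → a i = 0) ∧
      (∑ i, a i * Y i = 0) ∧
      (∑ i, (a i * Y i) • A i = (2 * c) • S.mulVec ustar) := by
  classical
  have hnem : Nonempty (Fin n) := ⟨⟨0, hn⟩⟩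
  have hnR : (0:ℝ) < n := Nat.cast_pos.mpr hn
  have hln : 0 < lam / n := div_pos hlam hnR
  set z : Fin n → ℝ := fun i => Y i * (ustar ⬝ᵥ A i - tstar) with hzdef
  set lo : Fin n → ℝ := fun i => if 0 < 1 - z i then lam / n else 0 with hlodef
  set hi : Fin n → ℝ := fun i => if 1 - z i < 0 then 0 else lam / n with hhidef
  set K : Set (Fin n → ℝ) := Set.univ.pi fun i => Set.Icc (lo i) (hi i) with hKdef
  set L : (Fin n → ℝ) →ₗ[ℝ] (Fin d → ℝ) × ℝ :=
    { toFun := fun a => (∑ i, (a i * Y i) • A i, -∑ i, a i * Y i)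
      map_add' := by
        intro a b
        refine Prod.ext ?_ ?_ <;>
          simp [add_mul, add_smul, Finset.sum_add_distrib, add_comm]
      map_smul' := by
        intro r a
        refine Prod.ext ?_ ?_
        · simp only [Pi.smul_apply, smul_eq_mul, RingHom.id_apply, Prod.smul_mk, mul_assoc]
          rw [Finset.smul_sum]
          exact Finset.sum_congr rfl fun i _ => (smul_smul r (a i * Y i) (A i)).symm
        · simp only [Pi.smul_apply, smul_eq_mul, RingHom.id_apply, Prod.smul_mk, smul_neg]
          rw [mul_neg, Finset.mul_sum, neg_inj]
          exact Finset.sum_congr rfl fun i _ => by ring } with hLdef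
  have hKcv : Convex ℝ K := convex_pi fun i _ => convex_Icc _ _
  have hKcp : IsCompact K := isCompact_univ_pi fun i => isCompact_Icc
  have hScv : Convex ℝ (L '' K) := hKcv.linear_image L
  have hScp : IsCompact (L '' K) := hKcp.image L.continuous_of_finiteDimensional
  have hScl : IsClosed (L '' K) := hScp.isClosed
  set q : (Fin d → ℝ) × ℝ := ((2 * c) • S.mulVec ustar, (0:ℝ)) with hqdef
  have hqmem : q ∈ L '' K := by
    by_contra hq
    obtain ⟨f, r, hfS, hfq⟩ := geometric_hahn_banach_closed_point hScv hScl hq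
    set du : Fin d → ℝ := fun j => f ((Pi.single j 1 : Fin d → ℝ), (0:ℝ)) with hdudef
    set dt : ℝ := f ((0 : Fin d → ℝ), (1:ℝ)) with hdtdef
    have hrepr : ∀ (x : Fin d → ℝ) (t' : ℝ), f (x, t') = x ⬝ᵥ du + t' * dt := by
      intro x t'
      have hx : ((x, t') : (Fin d → ℝ) × ℝ)
          = (∑ j, x j • (((Pi.single j 1 : Fin d → ℝ), (0:ℝ)) : (Fin d → ℝ) × ℝ))
            + t' • (((0 : Fin d → ℝ), (1:ℝ)) : (Fin d → ℝ) × ℝ) := by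
        refine Prod.ext ?_ ?_
        · simp only [Prod.fst_sum, Prod.fst_add, Prod.smul_mk, smul_zero, add_zero]
          have h1 : ∀ j : Fin d, x j • (Pi.single j (1:ℝ) : Fin d → ℝ)
              = Pi.single j (x j) := fun j => by
            ext k; by_cases h : j = k <;> simp [Pi.single_apply, h]
          rw [Finset.sum_congr rfl fun j _ => h1 j, Finset.univ_sum_single]
        · simp [Prod.snd_sum]
      rw [hx, map_add, map_sum, _root_.map_smul]
      simp only [_root_.map_smul, smul_eq_mul]
      rfl
    set w' : Fin n → ℝ := fun i => Y i * (A i ⬝ᵥ du - dt) with hwdef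
    set astar : Fin n → ℝ := fun i =>
      if 0 < 1 - z i then lam / n else if 1 - z i < 0 then 0 else
        if 0 < w' i then lam / n else 0 with hastardef
    have hastarK : astar ∈ K := by
      intro i _
      simp only [hastardef, hlodef, hhidef, Set.mem_Icc]
      rcases lt_trichotomy (1 - z i) 0 with h | h | h
      · simp only [if_neg (not_lt.mpr h.le), if_pos h]
        exact ⟨le_refl 0, le_refl 0⟩
      · simp only [if_neg (not_lt.mpr h.le), if_neg (not_lt.mpr h.ge)]
        split_ifs
        · exact ⟨hln.le, le_rfl⟩
        · exact ⟨le_rfl, hln.le⟩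
      · simp only [if_pos h, if_neg (not_lt.mpr h.le)]
        exact ⟨le_rfl, le_rfl⟩
    have hfLa : f (L astar) = ∑ i, astar i * w' i := by
      have hLa : L astar = (∑ i, (astar i * Y i) • A i, -∑ i, astar i * Y i) := rfl
      rw [hLa, hrepr, sum_dotProduct']
      have h2 : ∀ i : Fin n, ((astar i * Y i) • A i) ⬝ᵥ du
          = astar i * (Y i * (A i ⬝ᵥ du)) := by
        intro i; rw [smul_dotProduct, smul_eq_mul]; ring
      rw [Finset.sum_congr rfl fun i _ => h2 i, neg_mul, Finset.sum_mul,
        ← sub_eq_add_neg, ← Finset.sum_sub_distrib]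
      exact Finset.sum_congr rfl fun i _ => by simp only [hwdef]; ring
    have hfq' : f q = (2 * c) * (S.mulVec ustar ⬝ᵥ du) := by
      rw [hqdef, hrepr, smul_dotProduct, smul_eq_mul]
      ring
    set D' : ℝ := S.mulVec ustar ⬝ᵥ du with hD'def
    set QQ : ℝ := du ⬝ᵥ S.mulVec du with hQQdef
    set σ : ℝ := ∑ i, astar i * w' i with hσdef
    have hδ : σ < 2 * c * D' := by
      have h1 := hfS (L astar) ⟨astar, hastarK, rfl⟩
      rw [hfLa] at h1
      rw [hfq'] at hfq
      linarith
    have hQ0 : 0 ≤ c * QQ := mul_nonneg hc.le (by simpa using hS.posSemidef.dotProduct_mulVec_nonneg du)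
    set ε : Fin n → ℝ := fun i => if 1 - z i = 0 then 1 else |1 - z i| / (|w' i| + 1) with hεdef
    have hεpos : ∀ i, 0 < ε i := by
      intro i
      simp only [hεdef]
      split_ifs with h
      · exact one_pos
      · exact div_pos (abs_pos.mpr h) (by positivity)
    have hunem : (Finset.univ : Finset (Fin n)).Nonempty := Finset.univ_nonempty
    set s : ℝ := min (Finset.univ.inf' hunem ε) ((2 * c * D' - σ) / (c * QQ + 1)) with hsdef
    have hspos : 0 < s := by
      refine lt_min ?_ (div_pos (by linarith) (by linarith))
      rw [Finset.lt_inf'_iff]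
      exact fun i _ => hεpos i
    have hsε : ∀ i, s ≤ ε i := fun i =>
      (min_le_left _ _).trans (Finset.inf'_le _ (Finset.mem_univ i))
    have hsD : s * (c * QQ + 1) ≤ 2 * c * D' - σ := by
      have h1 : s ≤ (2 * c * D' - σ) / (c * QQ + 1) := min_le_right _ _
      exact (le_div_iff₀ (by linarith)).mp h1
    have hsw : ∀ i, 1 - z i ≠ 0 → s * |w' i| + s ≤ |1 - z i| := by
      intro i h
      have h1 := hsε i
      simp only [hεdef, if_neg h] at h1
      have h2 : (0:ℝ) < |w' i| + 1 := by positivity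
      have h3 := (le_div_iff₀ h2).mp h1
      nlinarith [abs_nonneg (w' i)]
    have harg : ∀ i, 1 - Y i * ((ustar - s • du) ⬝ᵥ A i - (tstar - s * dt))
        = 1 - z i + s * w' i := by
      intro i
      rw [sub_dotProduct, smul_dotProduct, smul_eq_mul]
      simp only [hzdef, hwdef]
      rw [dotProduct_comm du (A i)]
      ring
    have hkey : ∀ i, lam / n * max (1 - z i + s * w' i) 0
        = lam / n * max (1 - z i) 0 + s * (astar i * w' i) := by
      intro i
      rcases lt_trichotomy (1 - z i) 0 with h | h | h
      · have ha : astar i = 0 := by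
          simp only [hastardef, if_neg (not_lt.mpr h.le), if_pos h]
        have h3 := hsw i h.ne
        have h4 : |1 - z i| = -(1 - z i) := abs_of_neg h
        have h5 : s * w' i ≤ s * |w' i| :=
          mul_le_mul_of_nonneg_left (le_abs_self _) hspos.le
        have hb : 1 - z i + s * w' i ≤ 0 := by linarith
        rw [max_eq_right hb, max_eq_right h.le, ha]; ring
      · have hb : max (1 - z i) 0 = 0 := by rw [h]; simp
        rcases le_or_gt (w' i) 0 with hw | hw
        · have ha : astar i = 0 := by
            simp only [hastardef, if_neg (not_lt.mpr h.le), if_neg (not_lt.mpr h.ge),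
              if_neg (not_lt.mpr hw)]
          have hb2 : 1 - z i + s * w' i ≤ 0 := by nlinarith [hspos.le]
          rw [max_eq_right hb2, hb, ha]; ring
        · have ha : astar i = lam / n := by
            simp only [hastardef, if_neg (not_lt.mpr h.le), if_neg (not_lt.mpr h.ge),
              if_pos hw]
          have hb2 : 0 ≤ 1 - z i + s * w' i := by nlinarith [hspos.le]
          rw [max_eq_left hb2, hb, h, ha]; ring
      · have ha : astar i = lam / n := by simp only [hastardef, if_pos h]
        have h3 := hsw i h.ne'
        have h4 : |1 - z i| = 1 - z i := abs_of_pos h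
        have h5 : -(s * |w' i|) ≤ s * w' i := by nlinarith [neg_abs_le (w' i), hspos.le]
        have hb : 0 ≤ 1 - z i + s * w' i := by linarith
        rw [max_eq_left hb, max_eq_left h.le, ha]; ring
    have hquad : (ustar - s • du) ⬝ᵥ S.mulVec (ustar - s • du)
        = ustar ⬝ᵥ S.mulVec ustar - 2 * s * D' + s ^ 2 * QQ := by
      have hsymm := posdef_symm hS
      have h1 : ustar ⬝ᵥ S.mulVec du = D' := symm_dot hsymm ustar du
      have h2 : du ⬝ᵥ S.mulVec ustar = D' := by
        rw [dotProduct_comm]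
      rw [Matrix.mulVec_sub, Matrix.mulVec_smul, dotProduct_sub, sub_dotProduct,
        sub_dotProduct, dotProduct_smul, smul_dotProduct, smul_dotProduct, dotProduct_smul]
      simp only [smul_eq_mul]
      rw [h1, h2, hQQdef]
      ring
    have e1 : ∀ i : Fin n, max (1 - Y i * (ustar ⬝ᵥ A i - tstar)) 0 = max (1 - z i) 0 :=
      fun i => by simp only [hzdef]
    have e2 : ∀ i : Fin n,
        max (1 - Y i * ((ustar - s • du) ⬝ᵥ A i - (tstar - s * dt))) 0
          = max (1 - z i + s * w' i) 0 := fun i => by rw [harg i]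
    have hmain := hmin (ustar - s • du) (tstar - s * dt)
    rw [Finset.sum_congr rfl fun i _ => e1 i, Finset.sum_congr rfl fun i _ => e2 i,
      hquad] at hmain
    have hsum : lam / ↑n * ∑ i, max (1 - z i + s * w' i) 0
        = lam / ↑n * ∑ i, max (1 - z i) 0 + s * σ := by
      rw [Finset.mul_sum, Finset.sum_congr rfl fun i _ => hkey i, Finset.sum_add_distrib,
        ← Finset.mul_sum, ← Finset.mul_sum, hσdef]
    rw [hsum] at hmain
    nlinarith [mul_le_mul_of_nonneg_left hsD hspos.le, pow_pos hspos 2, hmain]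

  obtain ⟨a, haK, haL⟩ := hqmem
  have haK' : ∀ i, lo i ≤ a i ∧ a i ≤ hi i := fun i => haK i (Set.mem_univ i)
  have hL1 : ∑ i, (a i * Y i) • A i = (2 * c) • S.mulVec ustar := congrArg Prod.fst haL
  have hL2 : ∑ i, a i * Y i = 0 := by
    have h : (-∑ i, a i * Y i : ℝ) = 0 := congrArg Prod.snd haL
    linarith
  refine ⟨a, ?_, ?_, ?_, hL2, hL1⟩
  · intro i
    obtain ⟨h1, h2⟩ := haK' i
    constructor
    · refine le_trans ?_ h1
      simp only [hlodef]
      split_ifs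
      · exact hln.le
      · exact le_rfl
    · refine le_trans h2 ?_
      simp only [hhidef]
      split_ifs
      · exact hln.le
      · exact le_rfl
  · intro i hpos
    obtain ⟨h1, h2⟩ := haK' i
    have hzi : 0 < 1 - z i := by simpa [hzdef] using hpos
    have hlo : lo i = lam / n := by simp only [hlodef, if_pos hzi]
    have hhi : hi i = lam / n := by
      simp only [hhidef, if_neg (not_lt.mpr (by linarith : (0:ℝ) ≤ 1 - z i))]
    exact le_antisymm (hhi ▸ h2) (hlo ▸ h1)
  · intro i hneg
    obtain ⟨h1, h2⟩ := haK' i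
    have hzi : 1 - z i < 0 := by simpa [hzdef] using hneg
    have hlo : lo i = 0 := by
      simp only [hlodef, if_neg (not_lt.mpr (by linarith : 1 - z i ≤ 0))]
    have hhi : hi i = 0 := by simp only [hhidef, if_pos hzi]
    exact le_antisymm (hhi ▸ h2) (hlo ▸ h1)

end Stmt11Aux

/-- The dual objective of the `u`-update quadratic program:
`D(α) = −Σᵢ αᵢ + (1/4) Σᵢ Σⱼ αᵢαⱼỸᵢỸⱼ ((Xᵢ−X̄)v)ᵀΣ_r⁻¹((Xⱼ−X̄)v) / (vᵀΣ_c v)`. -/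
def dualObjU {n d₁ d₂ : ℕ} (Sr : Matrix (Fin d₁) (Fin d₁) ℝ)
    (Sc : Matrix (Fin d₂) (Fin d₂) ℝ) (X : Fin n → Matrix (Fin d₁) (Fin d₂) ℝ)
    (Ytil : Fin n → ℝ) (v : Fin d₂ → ℝ) (α : Fin n → ℝ) : ℝ :=
  -∑ i, α i + (1 / 4) * ∑ i, ∑ j, α i * α j * Ytil i * Ytil j *
    (((X i - sampleMean X).mulVec v) ⬝ᵥ (Sr⁻¹.mulVec ((X j - sampleMean X).mulVec v)))
      / bilin v Sc v

set_option maxHeartbeats 2000000 in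
/-- **Theorem 2, part 1 (dual characterization of the `u`-update).** If `(u*, t*)` minimizes
the PSMM objective in `(u, t)` for fixed `v ≠ 0`, then there is a dual-feasible `α` with
`u* = (1/2) Σᵢ (αᵢỸᵢ) Σ_r⁻¹(Xᵢ−X̄)v / (vᵀΣ_c v)` minimizing the dual objective. -/
theorem stmt_11 {n d₁ d₂ : ℕ} (hn : 0 < n)
    (Sr : Matrix (Fin d₁) (Fin d₁) ℝ) (Sc : Matrix (Fin d₂) (Fin d₂) ℝ)
    (hSr : Sr.PosDef) (hSc : Sc.PosDef)
    (X : Fin n → Matrix (Fin d₁) (Fin d₂) ℝ)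
    (Ytil : Fin n → ℝ) (hYtil : ∀ i, Ytil i = -1 ∨ Ytil i = 1)
    (lam : ℝ) (hlam : 0 < lam)
    (v : Fin d₂ → ℝ) (hv : v ≠ 0)
    (ustar : Fin d₁ → ℝ) (tstar : ℝ)
    (hmin : ∀ (u : Fin d₁ → ℝ) (t : ℝ),
      bilin ustar Sr ustar * bilin v Sc v
          + lam / n * ∑ i, max (1 - Ytil i * (bilin ustar (X i - sampleMean X) v - tstar)) 0
        ≤ bilin u Sr u * bilin v Sc v
          + lam / n * ∑ i, max (1 - Ytil i * (bilin u (X i - sampleMean X) v - t)) 0) :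
    ∃ α : Fin n → ℝ,
      (∀ i, 0 ≤ α i ∧ α i ≤ lam / n) ∧
      (∑ i, α i * Ytil i = 0) ∧
      ustar = (2 * bilin v Sc v)⁻¹ •
        ∑ i, (α i * Ytil i) • (Sr⁻¹.mulVec ((X i - sampleMean X).mulVec v)) ∧
      (∀ β : Fin n → ℝ, (∀ i, 0 ≤ β i ∧ β i ≤ lam / n) → (∑ i, β i * Ytil i = 0) →
        dualObjU Sr Sc X Ytil v α ≤ dualObjU Sr Sc X Ytil v β) := by
    classical
  set c : ℝ := bilin v Sc v with hcdef
  have hc : 0 < c := by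
    rw [hcdef, Stmt11Aux.bilin_eq]
    simpa using hSc.dotProduct_mulVec_pos hv
  have hmin' : ∀ (u : Fin d₁ → ℝ) (t : ℝ),
      (ustar ⬝ᵥ Sr.mulVec ustar) * c
          + lam / n * ∑ i, max (1 - Ytil i * (ustar ⬝ᵥ (X i - sampleMean X).mulVec v - tstar)) 0
        ≤ (u ⬝ᵥ Sr.mulVec u) * c
          + lam / n * ∑ i, max (1 - Ytil i * (u ⬝ᵥ (X i - sampleMean X).mulVec v - t)) 0 := by
    intro u t
    have h := hmin u t
    simpa only [Stmt11Aux.bilin_eq] using h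
  obtain ⟨a, hbox, hact, hinact, hsum0, hwa⟩ :=
    Stmt11Aux.kkt_exists hn hSr hc (fun i => (X i - sampleMean X).mulVec v) Ytil hlam
      ustar tstar hmin'
  have h2c : (2 * c) ≠ 0 := by positivity
  set zz : Fin n → ℝ := fun i => Ytil i * (ustar ⬝ᵥ (X i - sampleMean X).mulVec v - tstar)
    with hzzdef
  set H : ℝ := ∑ i, max (1 - zz i) 0 with hHdef
  set QS : ℝ := ustar ⬝ᵥ Sr.mulVec ustar with hQSdef
  -- the representation formula
  have hform : ustar = (2 * c)⁻¹ •
      ∑ i, (a i * Ytil i) • (Sr⁻¹.mulVec ((X i - sampleMean X).mulVec v)) := by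
    have h1 : Sr⁻¹.mulVec (∑ i, (a i * Ytil i) • ((X i - sampleMean X).mulVec v))
        = ∑ i, (a i * Ytil i) • (Sr⁻¹.mulVec ((X i - sampleMean X).mulVec v)) := by
      rw [Stmt11Aux.mulVec_sum']
      exact Finset.sum_congr rfl fun i _ => Matrix.mulVec_smul _ _ _
    have h2 : Sr⁻¹.mulVec ((2 * c) • Sr.mulVec ustar) = (2 * c) • ustar := by
      rw [Matrix.mulVec_smul, Stmt11Aux.inv_mulVec_mulVec hSr]
    rw [← h1, hwa, h2, smul_smul, inv_mul_cancel₀ h2c, one_smul]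
  -- rewrite of the dual objective
  have hdual : ∀ β : Fin n → ℝ, dualObjU Sr Sc X Ytil v β
      = -∑ i, β i + ((∑ i, (β i * Ytil i) • ((X i - sampleMean X).mulVec v)) ⬝ᵥ
          Sr⁻¹.mulVec (∑ i, (β i * Ytil i) • ((X i - sampleMean X).mulVec v))) / (4 * c) := by
    intro β
    unfold dualObjU
    rw [← hcdef]
    congr 1
    have e1 : ∑ i, ∑ j, β i * β j * Ytil i * Ytil j *
          (((X i - sampleMean X).mulVec v) ⬝ᵥ (Sr⁻¹.mulVec ((X j - sampleMean X).mulVec v))) / c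
        = (∑ i, ∑ j, (β i * Ytil i) * (β j * Ytil j) *
          (((X i - sampleMean X).mulVec v) ⬝ᵥ (Sr⁻¹.mulVec ((X j - sampleMean X).mulVec v)))) / c := by
      rw [Finset.sum_div]
      refine Finset.sum_congr rfl fun i _ => ?_
      rw [Finset.sum_div]
      exact Finset.sum_congr rfl fun j _ => by ring
    have e2 := Stmt11Aux.double_sum_eq Sr⁻¹ (fun i => β i * Ytil i)
      (fun i => (X i - sampleMean X).mulVec v)
    simp only at e2
    rw [e1, e2]
    ring
  -- generic identity : ∑ γ i * zz i = ustar ⬝ᵥ w_γ  when ∑ γ i Ytil i = 0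
  have hsz : ∀ γ : Fin n → ℝ, (∑ i, γ i * Ytil i = 0) →
      ∑ i, γ i * zz i
        = ustar ⬝ᵥ (∑ i, (γ i * Ytil i) • ((X i - sampleMean X).mulVec v)) := by
    intro γ hγ
    rw [Stmt11Aux.dotProduct_sum']
    have h1 : ∀ i, ustar ⬝ᵥ ((γ i * Ytil i) • ((X i - sampleMean X).mulVec v))
        = (γ i * Ytil i) * (ustar ⬝ᵥ (X i - sampleMean X).mulVec v) := fun i => by
      rw [dotProduct_smul, smul_eq_mul]
    rw [Finset.sum_congr rfl fun i _ => h1 i]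
    have h2 : ∀ i, γ i * zz i
        = (γ i * Ytil i) * (ustar ⬝ᵥ (X i - sampleMean X).mulVec v)
          - (γ i * Ytil i) * tstar := fun i => by simp only [hzzdef]; ring
    rw [Finset.sum_congr rfl fun i _ => h2 i, Finset.sum_sub_distrib, ← Finset.sum_mul, hγ,
      zero_mul, sub_zero]
  refine ⟨a, hbox, hsum0, hform, ?_⟩
  intro β hb hs0
  rw [hdual β, hdual a]
  set wa : Fin d₁ → ℝ := ∑ i, (a i * Ytil i) • ((X i - sampleMean X).mulVec v) with hwadef
  set wb : Fin d₁ → ℝ := ∑ i, (β i * Ytil i) • ((X i - sampleMean X).mulVec v) with hwbdef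
  have hWa : wa ⬝ᵥ Sr⁻¹.mulVec wa = 4 * c ^ 2 * QS := by
    rw [hwa, Matrix.mulVec_smul, Stmt11Aux.inv_mulVec_mulVec hSr, dotProduct_smul,
      smul_dotProduct]
    simp only [smul_eq_mul]
    rw [dotProduct_comm, hQSdef]
    ring
  have hua : ustar ⬝ᵥ wa = 2 * c * QS := by
    rw [hwa, dotProduct_smul, smul_eq_mul, hQSdef]
  have hsza : ∑ i, a i * zz i = ustar ⬝ᵥ wa := hsz a hsum0
  have hszb : ∑ i, β i * zz i = ustar ⬝ᵥ wb := hsz β hs0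
  have hHa : ∑ i, a i * (1 - zz i) = lam / n * H := by
    rw [hHdef, Finset.mul_sum]
    refine Finset.sum_congr rfl fun i _ => ?_
    rcases lt_trichotomy (1 - zz i) 0 with h | h | h
    · have ha0 : a i = 0 := hinact i (by simpa [hzzdef] using h)
      rw [ha0, max_eq_right h.le]
      ring
    · rw [h]
      simp
    · have ha1 : a i = lam / n := hact i (by simpa [hzzdef] using h)
      rw [ha1, max_eq_left h.le]
  have hHb : ∑ i, β i * (1 - zz i) ≤ lam / n * H := by
    rw [hHdef, Finset.mul_sum]
    refine Finset.sum_le_sum fun i _ => ?_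
    obtain ⟨hb1, hb2⟩ := hb i
    rcases le_or_gt (1 - zz i) 0 with h | h
    · have : β i * (1 - zz i) ≤ 0 := mul_nonpos_of_nonneg_of_nonpos hb1 h
      have h2 : 0 ≤ lam / n * max (1 - zz i) 0 := by positivity
      linarith
    · rw [max_eq_left h.le]
      exact mul_le_mul_of_nonneg_right hb2 h.le
  have hsa : ∑ i, a i = lam / n * H + 2 * c * QS := by
    have h1 : ∀ i, a i = a i * (1 - zz i) + a i * zz i := fun i => by ring
    rw [Finset.sum_congr rfl fun i _ => h1 i, Finset.sum_add_distrib, hHa, hsza, hua]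
  have hqlb := Stmt11Aux.quad_lower hSr hc ustar wb
  have hsb : ∑ i, β i - ustar ⬝ᵥ wb = ∑ i, β i * (1 - zz i) := by
    have h1 : ∀ i, β i * (1 - zz i) = β i - β i * zz i := fun i => by ring
    rw [Finset.sum_congr rfl fun i _ => h1 i, Finset.sum_sub_distrib, hszb]
  have hWaq : wa ⬝ᵥ Sr⁻¹.mulVec wa / (4 * c) = c * QS := by
    rw [hWa]
    field_simp
  rw [hWaq]
  have h4c : (0:ℝ) < 4 * c := by linarith
  have hneg : -(wb ⬝ᵥ Sr⁻¹.mulVec wb / (4 * c)) ≤ c * QS - ustar ⬝ᵥ wb := by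
    rw [← neg_div]
    exact hqlb
  linarith [hsa, hneg, hsb, hHb]
end
end
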